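/- arXiv:1401.4849 — 7 statements merged into one kernel-verified Lean document; each statement's English description precedes it below -/
import Mathlib

section
/- For any finite trees S and T on at least 2 vertices, δ(S,T) ≥ sup_{t>0} [ P(D_max(S) > t) − P(D_max(T) > t) ], where δ(S,T) = lim_{n→∞} TV(PA(n,S), PA(n,T)). -/
open MeasureTheory Filter Real
open scoped ENNReal

noncomputable section

/-- The degree of vertex `v` in a graph on `ℕ`. -/
def degN (G : SimpleGraph ℕ) (v : ℕ) : ℕ := (G.neighborSet v).ncard

/-- `G` is a tree on the vertex set `{0, …, k-1}` (all other vertices isolated). -/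
def IsTreeOn (k : ℕ) (G : SimpleGraph ℕ) : Prop :=
  (∀ v w : ℕ, G.Adj v w → v < k ∧ w < k) ∧ (G.induce {v : ℕ | v < k}).IsTree

instance : MeasurableSpace (SimpleGraph ℕ) := ⊤

/-- Add the edge `uv` to `G`. -/
def addEdge (G : SimpleGraph ℕ) (u v : ℕ) : SimpleGraph ℕ :=
  G ⊔ SimpleGraph.fromEdgeSet {s(u, v)}

/-- One step of preferential attachment: the current graph has `n` vertices `0, …, n-1`;
the new vertex `n` attaches to an existing vertex `v` with probability `deg v / (2(n-1))`. -/
def paStep (n : ℕ) (G : SimpleGraph ℕ) : Measure (SimpleGraph ℕ) :=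
  Measure.sum fun v : ℕ =>
    ((degN G v : ℝ≥0∞) / ((2 * (n - 1) : ℕ) : ℝ≥0∞)) • Measure.dirac (addEdge G n v)

def PAlawAux (k : ℕ) (T : SimpleGraph ℕ) : ℕ → Measure (SimpleGraph ℕ)
  | 0 => Measure.dirac T
  | m + 1 => (PAlawAux k T m).bind (paStep (k + m))

/-- The law of `PA(n, T)` for a seed tree `T` on `k` vertices, as a measure on labelled
graphs on `ℕ` (vertices are labelled `0, 1, 2, …` in order of arrival). -/
def PAlaw (k : ℕ) (T : SimpleGraph ℕ) (n : ℕ) : Measure (SimpleGraph ℕ) :=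
  PAlawAux k T (n - k)

/-- Graphs on `ℕ` up to isomorphism. -/
def graphSetoid : Setoid (SimpleGraph ℕ) where
  r G H := Nonempty (G ≃g H)
  iseqv := ⟨fun G => ⟨RelIso.refl G.Adj⟩, fun ⟨e⟩ => ⟨e.symm⟩, fun ⟨e⟩ ⟨f⟩ => ⟨e.trans f⟩⟩

/-- Isomorphism types of graphs on `ℕ`. -/
def GraphType : Type := Quotient graphSetoid

instance : MeasurableSpace GraphType := ⊤

/-- The law of the isomorphism type of `PA(n, T)`. -/
def PAtype (k : ℕ) (T : SimpleGraph ℕ) (n : ℕ) : Measure GraphType :=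
  (PAlaw k T n).map (Quotient.mk graphSetoid)

/-- Total variation distance between two measures. -/
def tvDist {α : Type*} [MeasurableSpace α] (μ ν : Measure α) : ℝ :=
  ⨆ A : Set α, |(μ A).toReal - (ν A).toReal|

/-- `δ(S, T) = lim_n TV(PA(n,S), PA(n,T))`, the total variation distance being taken
between the laws of the isomorphism types.  The limit exists since the sequence is
non-increasing; we express it as a `limsup`, which agrees with the limit. -/
def deltaPA (kS : ℕ) (S : SimpleGraph ℕ) (kT : ℕ) (T : SimpleGraph ℕ) : ℝ :=
  Filter.limsup (fun n : ℕ => tvDist (PAtype kS S n) (PAtype kT T n)) Filter.atTop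


/-- The maximum degree of a graph on `ℕ`. -/
def maxDeg (G : SimpleGraph ℕ) : ℕ := ⨆ v : ℕ, degN G v


lemma measG (s : Set (SimpleGraph ℕ)) : MeasurableSet s := trivial

lemma addEdge_adj (G : SimpleGraph ℕ) (u v a b : ℕ) :
    (addEdge G u v).Adj a b ↔ G.Adj a b ∨ (s(a, b) = s(u, v) ∧ a ≠ b) := by
  simp [addEdge, SimpleGraph.fromEdgeSet_adj]

/-- The invariant maintained by preferential attachment. -/
def PAInv (n : ℕ) (G : SimpleGraph ℕ) : Prop :=
  (∀ v w, G.Adj v w → v < n ∧ w < n) ∧ (∀ v, (G.neighborSet v).Finite) ∧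
    (∑ v ∈ Finset.range n, degN G v) = 2 * (n - 1)

lemma degN_eq_zero_of_ge {n : ℕ} {G : SimpleGraph ℕ} (h : ∀ v w, G.Adj v w → v < n ∧ w < n)
    {v : ℕ} (hv : n ≤ v) : degN G v = 0 := by
  have : G.neighborSet v = ∅ := by
    ext w; simp only [SimpleGraph.mem_neighborSet, Set.mem_empty_iff_false, iff_false]
    intro hadj; exact absurd (h v w hadj).1 (not_lt.2 hv)
  simp [degN, this]

lemma neighborSet_addEdge_self {n v : ℕ} {G : SimpleGraph ℕ}
    (hiso : ∀ w, ¬ G.Adj n w) (hvn : v ≠ n) :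
    (addEdge G n v).neighborSet n = {v} := by
  ext w
  simp only [SimpleGraph.mem_neighborSet, addEdge_adj, Set.mem_singleton_iff]
  constructor
  · rintro (h | ⟨hs, hne⟩)
    · exact absurd h (hiso w)
    · rcases Sym2.eq_iff.1 hs with ⟨-, rfl⟩ | ⟨h1, -⟩
      · rfl
      · exact absurd h1.symm hvn
  · rintro rfl; exact Or.inr ⟨rfl, fun h => hvn h.symm⟩

lemma neighborSet_addEdge_other {n v : ℕ} {G : SimpleGraph ℕ} (hvn : v ≠ n) :
    (addEdge G n v).neighborSet v = insert n (G.neighborSet v) := by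
  ext w
  simp only [SimpleGraph.mem_neighborSet, addEdge_adj, Set.mem_insert_iff]
  constructor
  · rintro (h | ⟨hs, hne⟩)
    · exact Or.inr h
    · rcases Sym2.eq_iff.1 hs with ⟨h1, -⟩ | ⟨-, rfl⟩
      · exact absurd h1 hvn
      · exact Or.inl rfl
  · rintro (rfl | h)
    · exact Or.inr ⟨Sym2.eq_swap, hvn⟩
    · exact Or.inl h

lemma neighborSet_addEdge_untouched {n v w : ℕ} {G : SimpleGraph ℕ}
    (hwn : w ≠ n) (hwv : w ≠ v) :
    (addEdge G n v).neighborSet w = G.neighborSet w := by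
  ext x
  simp only [SimpleGraph.mem_neighborSet, addEdge_adj]
  constructor
  · rintro (h | ⟨hs, -⟩)
    · exact h
    · rcases Sym2.eq_iff.1 hs with ⟨h1, -⟩ | ⟨h1, -⟩
      · exact absurd h1 hwn
      · exact absurd h1 hwv
  · exact Or.inl

lemma inv_step {n v : ℕ} {G : SimpleGraph ℕ} (hn : 2 ≤ n) (hG : PAInv n G) (hv : v < n) :
    PAInv (n + 1) (addEdge G n v) := by
  obtain ⟨hbd, hfin, hsum⟩ := hG
  have hvn : v ≠ n := Nat.ne_of_lt hv
  have hiso : ∀ w, ¬ G.Adj n w := fun w h => absurd (hbd n w h).1 (lt_irrefl n)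
  have hnmem : n ∉ G.neighborSet v := fun h => hiso v ((SimpleGraph.mem_neighborSet G v n).1 h).symm
  refine ⟨?_, ?_, ?_⟩
  · intro a b hab
    rcases (addEdge_adj G n v a b).1 hab with h | ⟨hs, -⟩
    · exact ⟨(hbd a b h).1.trans (Nat.lt_succ_self n), (hbd a b h).2.trans (Nat.lt_succ_self n)⟩
    · rcases Sym2.eq_iff.1 hs with ⟨h1, h2⟩ | ⟨h1, h2⟩ <;> omega
  · intro w
    rcases eq_or_ne w n with rfl | hwn
    · rw [neighborSet_addEdge_self hiso hvn]; exact Set.finite_singleton v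
    rcases eq_or_ne w v with rfl | hwv
    · rw [neighborSet_addEdge_other hvn]; exact (hfin w).insert n
    · rw [neighborSet_addEdge_untouched hwn hwv]; exact hfin w
  · have hdegn : degN (addEdge G n v) n = 1 := by
      rw [degN, neighborSet_addEdge_self hiso hvn, Set.ncard_singleton]
    have hstep : ∀ w ∈ Finset.range n,
        degN (addEdge G n v) w = degN G w + (if w = v then 1 else 0) := by
      intro w hw
      have hwn : w ≠ n := Nat.ne_of_lt (Finset.mem_range.1 hw)
      rcases eq_or_ne w v with rfl | hwv
      · simp only [eq_self_iff_true, if_true]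
        rw [degN, neighborSet_addEdge_other hvn, Set.ncard_insert_of_notMem hnmem (hfin w), degN]
      · simp only [if_neg hwv, add_zero, degN, neighborSet_addEdge_untouched hwn hwv]
    rw [Finset.sum_range_succ, hdegn, Finset.sum_congr rfl hstep, Finset.sum_add_distrib,
      Finset.sum_ite_eq' (Finset.range n) v (fun _ => 1), if_pos (Finset.mem_range.2 hv), hsum]
    omega

lemma degN_pos_lt {n : ℕ} {G : SimpleGraph ℕ} (hbd : ∀ v w, G.Adj v w → v < n ∧ w < n)
    {v : ℕ} (h : degN G v ≠ 0) : v < n := by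
  by_contra hv
  exact h (degN_eq_zero_of_ge hbd (not_lt.1 hv))

lemma paStep_apply (n : ℕ) (G : SimpleGraph ℕ) (s : Set (SimpleGraph ℕ)) :
    paStep n G s = ∑' v : ℕ,
      ((degN G v : ℝ≥0∞) / ((2 * (n - 1) : ℕ) : ℝ≥0∞)) * Measure.dirac (addEdge G n v) s := by
  rw [paStep, Measure.sum_apply _ (measG s)]
  simp [Measure.smul_apply, smul_eq_mul]

lemma paStep_univ {n : ℕ} {G : SimpleGraph ℕ} (hn : 2 ≤ n) (hG : PAInv n G) :
    paStep n G Set.univ = 1 := by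
  rw [paStep_apply]
  have h1 : ∀ v : ℕ, Measure.dirac (addEdge G n v) (Set.univ : Set (SimpleGraph ℕ)) = 1 :=
    fun v => by simp
  simp only [h1, mul_one]
  have h2 : ∀ v : ℕ, v ∉ Finset.range n → ((degN G v : ℝ≥0∞) / ((2 * (n - 1) : ℕ) : ℝ≥0∞)) = 0 := by
    intro v hv
    rw [degN_eq_zero_of_ge hG.1 (not_lt.1 (fun h => hv (Finset.mem_range.2 h)))]
    simp
  rw [tsum_eq_sum h2]
  simp only [div_eq_mul_inv, ← Finset.sum_mul]
  rw [← Nat.cast_sum, hG.2.2]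
  exact ENNReal.mul_inv_cancel (Nat.cast_ne_zero.2 (by omega)) (ENNReal.natCast_ne_top _)

lemma paStep_bad {n : ℕ} {G : SimpleGraph ℕ} (hn : 2 ≤ n) (hG : PAInv n G) :
    paStep n G {H | ¬ PAInv (n + 1) H} = 0 := by
  rw [paStep_apply]
  refine ENNReal.tsum_eq_zero.2 fun v => ?_
  rcases eq_or_ne (degN G v) 0 with h0 | h0
  · simp [h0]
  · have hv : v < n := degN_pos_lt hG.1 h0
    have : Measure.dirac (addEdge G n v) {H | ¬ PAInv (n + 1) H} = 0 := by
      rw [Measure.dirac_apply' _ (measG _)]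
      simp only [Set.indicator_apply_eq_zero, Set.mem_setOf_eq]
      intro h
      exact absurd (inv_step hn hG hv) h
    simp [this]

lemma PAlawAux_univ_bad {k : ℕ} {T : SimpleGraph ℕ} (hk : 2 ≤ k) (hT : PAInv k T) (m : ℕ) :
    PAlawAux k T m Set.univ = 1 ∧ PAlawAux k T m {G | ¬ PAInv (k + m) G} = 0 := by
  induction m with
  | zero =>
    constructor
    · simp [PAlawAux]
    · rw [PAlawAux, Measure.dirac_apply' _ (measG _)]
      simp only [Set.indicator_apply_eq_zero, Set.mem_setOf_eq]
      intro h; exact absurd hT h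
  | succ m ih =>
    have hae : ∀ᵐ G ∂(PAlawAux k T m), PAInv (k + m) G := by
      rw [MeasureTheory.ae_iff]; exact ih.2
    have hmeas : Measurable (paStep (k + m)) := measurable_from_top
    have hkm : 2 ≤ k + m := le_trans hk (Nat.le_add_right k m)
    constructor
    · rw [PAlawAux, Measure.bind_apply MeasurableSet.univ hmeas.aemeasurable]
      rw [MeasureTheory.lintegral_congr_ae (hae.mono fun G hG => paStep_univ hkm hG)]
      simp [ih.1]
    · rw [PAlawAux, Measure.bind_apply (measG _) hmeas.aemeasurable]
      have : ∀ᵐ G ∂(PAlawAux k T m),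
          paStep (k + m) G {H | ¬ PAInv (k + (m + 1)) H} = 0 :=
        hae.mono fun G hG => paStep_bad hkm hG
      rw [MeasureTheory.lintegral_congr_ae this]
      simp

lemma PAlaw_univ {k : ℕ} {T : SimpleGraph ℕ} (hk : 2 ≤ k) (hT : PAInv k T) (n : ℕ) :
    PAlaw k T n Set.univ = 1 :=
  (PAlawAux_univ_bad hk hT (n - k)).1

lemma PAlaw_prob {k : ℕ} {T : SimpleGraph ℕ} (hk : 2 ≤ k) (hT : PAInv k T) (n : ℕ) :
    IsProbabilityMeasure (PAlaw k T n) := ⟨PAlaw_univ hk hT n⟩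

lemma aemeasurable_of_map_PAlaw {Ω : Type} [MeasurableSpace Ω] {P : Measure Ω}
    {X : Ω → SimpleGraph ℕ} {k n : ℕ} {T : SimpleGraph ℕ}
    (hk : 2 ≤ k) (hT : PAInv k T) (h : P.map X = PAlaw k T n) :
    AEMeasurable X P := by
  by_contra hX
  rw [Measure.map_of_not_aemeasurable hX] at h
  have := PAlaw_univ hk hT n
  rw [← h] at this
  simp at this

lemma degN_induce {k : ℕ} {T : SimpleGraph ℕ} (hbd : ∀ v w : ℕ, T.Adj v w → v < k ∧ w < k)
    (x : {v : ℕ | v < k}) :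
    ((T.induce {v : ℕ | v < k}).neighborSet x).ncard = degN T x.val := by
  have himg : Subtype.val '' ((T.induce {v : ℕ | v < k}).neighborSet x) =
      T.neighborSet x.val := by
    ext w
    simp only [Set.mem_image, SimpleGraph.mem_neighborSet, SimpleGraph.comap_adj]
    constructor
    · rintro ⟨u, hu, rfl⟩; exact hu
    · intro hw
      exact ⟨⟨w, (hbd _ _ hw).2⟩, hw, rfl⟩
  rw [degN, ← himg, Set.ncard_image_of_injective _ Subtype.val_injective]

lemma seed_inv {k : ℕ} {T : SimpleGraph ℕ} (hk : 2 ≤ k) (hT : IsTreeOn k T) : PAInv k T := by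
  obtain ⟨hbd, htree⟩ := hT
  refine ⟨hbd, ?_, ?_⟩
  · intro v
    exact Set.Finite.subset (Set.finite_lt_nat k) (fun w hw => (hbd v w hw).2)
  · classical
    set s : Set ℕ := {v : ℕ | v < k} with hs
    haveI : Fintype s := Set.fintypeLTNat k
    set H := T.induce s with hH
    haveI : DecidableRel H.Adj := Classical.decRel _
    have hdeg : ∀ x : s, H.degree x = degN T x.val := by
      intro x
      rw [← SimpleGraph.card_neighborFinset_eq_degree, SimpleGraph.neighborFinset_def,
        ← Set.ncard_eq_toFinset_card']
      exact degN_induce hbd x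
    have hcard : Fintype.card s = k := by
      rw [← Nat.card_eq_fintype_card, Nat.card_coe_set_eq]
      have : s = Set.Iio k := rfl
      rw [this, Set.ncard_eq_toFinset_card', Set.toFinset_Iio, Nat.card_Iio]
    have hsum2 : ∑ x : s, H.degree x = 2 * (k - 1) := by
      have hedge := htree.card_edgeFinset
      rw [hcard] at hedge
      rw [SimpleGraph.sum_degrees_eq_twice_card_edges]
      omega
    have hbij : ∑ v ∈ Finset.range k, degN T v = ∑ x : s, H.degree x := by
      simp only [hdeg]
      exact (Finset.sum_bij' (fun (x : s) _ => (x : ℕ))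
        (fun v hv => (⟨v, Finset.mem_range.1 hv⟩ : s))
        (fun x _ => Finset.mem_range.2 x.2) (fun v hv => Finset.mem_univ _)
        (fun x _ => rfl) (fun v hv => rfl) (fun x _ => rfl)).symm
    rw [hbij, hsum2]

lemma degN_iso {G H : SimpleGraph ℕ} (e : G ≃g H) (v : ℕ) : degN H (e v) = degN G v := by
  rw [degN, degN, ← Nat.card_coe_set_eq, ← Nat.card_coe_set_eq]
  exact (Nat.card_congr (e.mapNeighborSet v)).symm

lemma maxDeg_iso {G H : SimpleGraph ℕ} (e : G ≃g H) : maxDeg G = maxDeg H := by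
  rw [maxDeg, maxDeg, iSup, iSup]
  congr 1
  have h1 : degN G = degN H ∘ e := funext fun v => (degN_iso e v).symm
  have h2 : Set.range ⇑e = Set.univ := e.toEquiv.surjective.range_eq
  rw [h1, Set.range_comp, h2, Set.image_univ]

/-- Graphs with maximum degree larger than `c`. -/
def Emax (c : ℝ) : Set (SimpleGraph ℕ) := {G | c < (maxDeg G : ℝ)}

lemma preimage_Emax (c : ℝ) :
    Quotient.mk graphSetoid ⁻¹' (Quotient.mk graphSetoid '' Emax c) = Emax c := by
  ext G
  simp only [Set.mem_preimage, Set.mem_image]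
  constructor
  · rintro ⟨H, hH, hq⟩
    obtain ⟨e⟩ := Quotient.exact hq
    rwa [Emax, Set.mem_setOf_eq, ← maxDeg_iso e]
  · intro h; exact ⟨G, h, rfl⟩

lemma abs_sub_le_two {α : Type*} [MeasurableSpace α] (μ ν : Measure α)
    [IsProbabilityMeasure μ] [IsProbabilityMeasure ν] (A : Set α) :
    |(μ A).toReal - (ν A).toReal| ≤ 2 := by
  have h1 : (μ A).toReal ≤ 1 := by
    calc (μ A).toReal ≤ (μ Set.univ).toReal :=
          ENNReal.toReal_mono (measure_ne_top μ _) (measure_mono (Set.subset_univ A))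
      _ = 1 := by simp
  have h2 : (ν A).toReal ≤ 1 := by
    calc (ν A).toReal ≤ (ν Set.univ).toReal :=
          ENNReal.toReal_mono (measure_ne_top ν _) (measure_mono (Set.subset_univ A))
      _ = 1 := by simp
  have h3 : 0 ≤ (μ A).toReal := ENNReal.toReal_nonneg
  have h4 : 0 ≤ (ν A).toReal := ENNReal.toReal_nonneg
  rw [abs_le]; constructor <;> linarith

lemma le_tvDist {α : Type*} [MeasurableSpace α] (μ ν : Measure α)
    [IsProbabilityMeasure μ] [IsProbabilityMeasure ν] (A : Set α) :
    (μ A).toReal - (ν A).toReal ≤ tvDist μ ν := by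
  rw [tvDist]
  refine le_trans (le_abs_self _) (le_ciSup (f := fun A : Set α => |(μ A).toReal - (ν A).toReal|) ⟨2, ?_⟩ A)
  rintro x ⟨B, rfl⟩
  exact abs_sub_le_two μ ν B

lemma tvDist_le_two {α : Type*} [MeasurableSpace α] (μ ν : Measure α)
    [IsProbabilityMeasure μ] [IsProbabilityMeasure ν] : tvDist μ ν ≤ 2 := by
  rw [tvDist]
  exact ciSup_le (f := fun A : Set α => |(μ A).toReal - (ν A).toReal|) fun A => abs_sub_le_two μ ν A

lemma tvDist_nonneg {α : Type*} [MeasurableSpace α] (μ ν : Measure α)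
    [IsProbabilityMeasure μ] [IsProbabilityMeasure ν] : 0 ≤ tvDist μ ν := by
  calc (0:ℝ) = |(μ (∅ : Set α)).toReal - (ν (∅ : Set α)).toReal| := by simp
    _ ≤ ⨆ A : Set α, |(μ A).toReal - (ν A).toReal| :=
        le_ciSup (f := fun A : Set α => |(μ A).toReal - (ν A).toReal|)
          ⟨2, by rintro x ⟨B, rfl⟩; exact abs_sub_le_two μ ν B⟩ ∅
    _ = tvDist μ ν := rfl
lemma real_le_of_forall_pos_le_add {a b : ℝ} (h : ∀ ε : ℝ, 0 < ε → a ≤ b + ε) : a ≤ b := by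
  by_contra hab
  push_neg at hab
  have := h ((a - b) / 2) (by linarith)
  linarith

lemma measGT (s : Set GraphType) : MeasurableSet s := trivial

/-- `δ(S,T) ≥ sup_{t>0} [P(D_max(S) > t) - P(D_max(T) > t)]`, where `D_max(S)` (resp.
`D_max(T)`) is the a.s. limit of `Δ(PA(n,S))/√n` (resp. `Δ(PA(n,T))/√n`). -/
theorem delta_ge_max_degree_tail_difference
    (kS kT : ℕ) (hkS : 2 ≤ kS) (hkT : 2 ≤ kT)
    (S T : SimpleGraph ℕ) (hS : IsTreeOn kS S) (hT : IsTreeOn kT T)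
    {ΩS : Type} [MeasurableSpace ΩS] (PS : Measure ΩS) [IsProbabilityMeasure PS]
    {ΩT : Type} [MeasurableSpace ΩT] (PT : Measure ΩT) [IsProbabilityMeasure PT]
    (XS : ℕ → ΩS → SimpleGraph ℕ) (XT : ℕ → ΩT → SimpleGraph ℕ)
    (hXS : ∀ n : ℕ, kS ≤ n → PS.map (XS n) = PAlaw kS S n)
    (hXT : ∀ n : ℕ, kT ≤ n → PT.map (XT n) = PAlaw kT T n)
    (DmaxS : ΩS → ℝ) (DmaxT : ΩT → ℝ)
    (hDS : ∀ᵐ ω ∂PS,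
      Filter.Tendsto (fun n : ℕ => (maxDeg (XS n ω) : ℝ) / Real.sqrt n)
        Filter.atTop (nhds (DmaxS ω)))
    (hDT : ∀ᵐ ω ∂PT,
      Filter.Tendsto (fun n : ℕ => (maxDeg (XT n ω) : ℝ) / Real.sqrt n)
        Filter.atTop (nhds (DmaxT ω))) :
    ∀ t : ℝ, 0 < t →
      (PS {ω | t < DmaxS ω}).toReal - (PT {ω | t < DmaxT ω}).toReal ≤
        deltaPA kS S kT T := by
  intro t ht
  have hSinv : PAInv kS S := seed_inv hkS hS
  have hTinv : PAInv kT T := seed_inv hkT hT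
  have hprobS : ∀ n, IsProbabilityMeasure (PAtype kS S n) := fun n => by
    haveI := PAlaw_prob hkS hSinv n
    exact Measure.isProbabilityMeasure_map (measurable_from_top (f := Quotient.mk graphSetoid)).aemeasurable
  have hprobT : ∀ n, IsProbabilityMeasure (PAtype kT T n) := fun n => by
    haveI := PAlaw_prob hkT hTinv n
    exact Measure.isProbabilityMeasure_map (measurable_from_top (f := Quotient.mk graphSetoid)).aemeasurable
  set d : ℕ → ℝ := fun n => tvDist (PAtype kS S n) (PAtype kT T n) with hd
  have hLlimsup' : deltaPA kS S kT T = Filter.limsup d Filter.atTop := rfl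
  have hd_le : ∀ n, d n ≤ 2 := fun n => by
    haveI := hprobS n; haveI := hprobT n; exact tvDist_le_two (PAtype kS S n) (PAtype kT T n)
  have hd0 : ∀ n, 0 ≤ d n := fun n => by
    haveI := hprobS n; haveI := hprobT n; exact tvDist_nonneg (PAtype kS S n) (PAtype kT T n)
  set L : ℝ := deltaPA kS S kT T with hL
  have hLlimsup : L = Filter.limsup d Filter.atTop := hLlimsup'
  -- the identification of the pushforward measures
  have hPSA : ∀ n, kS ≤ n → ∀ c : ℝ,
      PS (XS n ⁻¹' Emax c) = PAtype kS S n (Quotient.mk graphSetoid '' Emax c) := by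
    intro n hn c
    have hXmeas : AEMeasurable (XS n) PS := aemeasurable_of_map_PAlaw hkS hSinv (hXS n hn)
    calc PS (XS n ⁻¹' Emax c) = (PS.map (XS n)) (Emax c) :=
          (Measure.map_apply₀ hXmeas ((measG _).nullMeasurableSet)).symm
      _ = PAlaw kS S n (Emax c) := by rw [hXS n hn]
      _ = PAlaw kS S n (Quotient.mk graphSetoid ⁻¹' (Quotient.mk graphSetoid '' Emax c)) := by
          rw [preimage_Emax]
      _ = PAtype kS S n (Quotient.mk graphSetoid '' Emax c) :=
          (Measure.map_apply measurable_from_top (measGT _)).symm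
  have hPTB : ∀ n, kT ≤ n → ∀ c : ℝ,
      PT (XT n ⁻¹' Emax c) = PAtype kT T n (Quotient.mk graphSetoid '' Emax c) := by
    intro n hn c
    have hXmeas : AEMeasurable (XT n) PT := aemeasurable_of_map_PAlaw hkT hTinv (hXT n hn)
    calc PT (XT n ⁻¹' Emax c) = (PT.map (XT n)) (Emax c) :=
          (Measure.map_apply₀ hXmeas ((measG _).nullMeasurableSet)).symm
      _ = PAlaw kT T n (Emax c) := by rw [hXT n hn]
      _ = PAlaw kT T n (Quotient.mk graphSetoid ⁻¹' (Quotient.mk graphSetoid '' Emax c)) := by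
          rw [preimage_Emax]
      _ = PAtype kT T n (Quotient.mk graphSetoid '' Emax c) :=
          (Measure.map_apply measurable_from_top (measGT _)).symm
  have hTV : ∀ n, kS ≤ n → kT ≤ n → ∀ c : ℝ,
      (PS (XS n ⁻¹' Emax c)).toReal - (PT (XT n ⁻¹' Emax c)).toReal ≤ d n := by
    intro n hnS hnT c
    rw [hPSA n hnS c, hPTB n hnT c]
    haveI := hprobS n; haveI := hprobT n
    exact le_tvDist _ _ _
  clear_value d L
  -- it suffices to prove the bound up to an arbitrary ε > 0
  refine real_le_of_forall_pos_le_add fun ε hε => ?_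
  -- Step A : approximate the event {t < DmaxS} from inside by {s < DmaxS} with s > t
  set U : ℕ → Set ΩS := fun j => {ω | t + 1 / (j + 1) < DmaxS ω} with hU
  have hUmono : Monotone U := by
    intro j j' hjj ω hω
    have hω' : t + 1 / ((j:ℝ) + 1) < DmaxS ω := hω
    have h1 : (1 : ℝ) / (j' + 1) ≤ 1 / (j + 1) := by
      apply one_div_le_one_div_of_le
      · positivity
      · have := (Nat.cast_le (α := ℝ)).2 hjj; linarith
    show t + 1 / ((j':ℝ) + 1) < DmaxS ω
    linarith
  have hUuniv : (⋃ j, U j) = {ω | t < DmaxS ω} := by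
    ext ω
    simp only [Set.mem_iUnion, hU, Set.mem_setOf_eq]
    constructor
    · rintro ⟨j, hj⟩
      have : (0:ℝ) < 1 / (j + 1) := by positivity
      linarith
    · intro hω
      obtain ⟨j, hj⟩ := exists_nat_one_div_lt (sub_pos.2 hω)
      exact ⟨j, by linarith⟩
  have htendU : Filter.Tendsto (fun j => (PS (U j)).toReal) Filter.atTop
      (nhds ((PS {ω | t < DmaxS ω}).toReal)) := by
    have h1 := tendsto_measure_iUnion_atTop (μ := PS) hUmono
    rw [hUuniv] at h1
    exact (ENNReal.tendsto_toReal (measure_ne_top PS _)).comp h1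
  obtain ⟨j0, hj0⟩ := (htendU.eventually
    (eventually_gt_nhds (show (PS {ω | t < DmaxS ω}).toReal - ε / 4 <
      (PS {ω | t < DmaxS ω}).toReal by linarith))).exists
  set s : ℝ := t + 1 / (j0 + 1) with hsdef
  have hst : t < s := by
    rw [hsdef]
    have : (0:ℝ) < 1 / ((j0:ℝ) + 1) := by positivity
    linarith
  have hA0 : (PS {ω | t < DmaxS ω}).toReal ≤ (PS {ω | s < DmaxS ω}).toReal + ε / 4 := by
    have : U j0 = {ω | s < DmaxS ω} := rfl
    rw [← this]; linarith
  clear_value s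
  -- events
  set A : ℕ → Set ΩS := fun n => XS n ⁻¹' Emax (s * Real.sqrt n) with hA
  set B : ℕ → Set ΩT := fun n => XT n ⁻¹' Emax (s * Real.sqrt n) with hB
  have hmemA : ∀ n ω, ω ∈ A n ↔ s * Real.sqrt n < (maxDeg (XS n ω) : ℝ) := by
    intro n ω; simp [hA, Emax, Set.mem_preimage, Set.mem_setOf_eq]
  have hmemB : ∀ n ω, ω ∈ B n ↔ s * Real.sqrt n < (maxDeg (XT n ω) : ℝ) := by
    intro n ω; simp [hB, Emax, Set.mem_preimage, Set.mem_setOf_eq]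
  -- Step C(i) : lower bound for PS (A n)
  set C : ℕ → Set ΩS := fun N => ⋂ n, ⋂ (_ : N ≤ n), A n with hC
  have hCmono : Monotone C := by
    intro N N' hNN ω hω
    simp only [hC, Set.mem_iInter] at hω ⊢
    intro n hn; exact hω n (le_trans hNN hn)
  have hCsub : ∀ N n, N ≤ n → C N ⊆ A n := by
    intro N n hn ω hω
    simp only [hC, Set.mem_iInter] at hω
    exact hω n hn
  have hbadS : PS {ω | ¬ Filter.Tendsto (fun n : ℕ => (maxDeg (XS n ω) : ℝ) / Real.sqrt n)
      Filter.atTop (nhds (DmaxS ω))} = 0 := hDS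
  have hsubS : {ω | s < DmaxS ω} ⊆ (⋃ N, C N) ∪
      {ω | ¬ Filter.Tendsto (fun n : ℕ => (maxDeg (XS n ω) : ℝ) / Real.sqrt n)
        Filter.atTop (nhds (DmaxS ω))} := by
    intro ω hω
    by_cases hconv : Filter.Tendsto (fun n : ℕ => (maxDeg (XS n ω) : ℝ) / Real.sqrt n)
        Filter.atTop (nhds (DmaxS ω))
    · left
      have hev := hconv.eventually (eventually_gt_nhds hω)
      obtain ⟨N, hN⟩ := Filter.eventually_atTop.1 hev
      refine Set.mem_iUnion.2 ⟨max N 1, ?_⟩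
      simp only [hC, Set.mem_iInter]
      intro n hn
      have hn1 : 1 ≤ n := le_trans (le_max_right N 1) hn
      have hsq : 0 < Real.sqrt n := Real.sqrt_pos.2 (by exact_mod_cast hn1)
      have := hN n (le_trans (le_max_left N 1) hn)
      rw [hmemA]
      exact (lt_div_iff₀ hsq).1 this
    · right; exact hconv
  have hSineq : PS {ω | s < DmaxS ω} ≤ PS (⋃ N, C N) := by
    calc PS {ω | s < DmaxS ω} ≤ PS ((⋃ N, C N) ∪ _) := measure_mono hsubS
      _ ≤ PS (⋃ N, C N) + PS _ := measure_union_le _ _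
      _ = PS (⋃ N, C N) := by rw [hbadS, add_zero]
  have htendC : Filter.Tendsto (fun N => (PS (C N)).toReal) Filter.atTop
      (nhds ((PS (⋃ N, C N)).toReal)) :=
    (ENNReal.tendsto_toReal (measure_ne_top PS _)).comp
      (tendsto_measure_iUnion_atTop (μ := PS) hCmono)
  obtain ⟨N₁, hN₁⟩ := (htendC.eventually
    (eventually_gt_nhds (show (PS (⋃ N, C N)).toReal - ε / 4 <
      (PS (⋃ N, C N)).toReal by linarith))).exists
  have hCchain : (PS {ω | s < DmaxS ω}).toReal ≤ (PS (C N₁)).toReal + ε / 4 := by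
    have h1 : (PS {ω | s < DmaxS ω}).toReal ≤ (PS (⋃ N, C N)).toReal :=
      ENNReal.toReal_mono (measure_ne_top PS _) hSineq
    linarith
  -- Step C(ii) : upper bound for PT (B n)
  set D : ℕ → Set ΩT := fun N => ⋃ n, ⋃ (_ : max N kT ≤ n), B n with hD
  have hDanti : Antitone D := by
    intro N N' hNN ω hω
    simp only [hD, Set.mem_iUnion] at hω ⊢
    obtain ⟨n, hn, hmem⟩ := hω
    exact ⟨n, le_trans (max_le_max hNN (le_refl kT)) hn, hmem⟩
  have hDnull : ∀ N, NullMeasurableSet (D N) PT := by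
    intro N
    refine NullMeasurableSet.iUnion fun n => NullMeasurableSet.iUnion fun hn => ?_
    exact (aemeasurable_of_map_PAlaw hkT hTinv
      (hXT n (le_trans (le_max_right N kT) hn))).nullMeasurableSet_preimage (measG _)
  have hBsubD : ∀ N n, max N kT ≤ n → B n ⊆ D N := by
    intro N n hn ω hω
    simp only [hD, Set.mem_iUnion]
    exact ⟨n, hn, hω⟩
  have hbadT : PT {ω | ¬ Filter.Tendsto (fun n : ℕ => (maxDeg (XT n ω) : ℝ) / Real.sqrt n)
      Filter.atTop (nhds (DmaxT ω))} = 0 := hDT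
  have hsubT : (⋂ N, D N) ⊆ {ω | t < DmaxT ω} ∪
      {ω | ¬ Filter.Tendsto (fun n : ℕ => (maxDeg (XT n ω) : ℝ) / Real.sqrt n)
        Filter.atTop (nhds (DmaxT ω))} := by
    intro ω hω
    by_cases hconv : Filter.Tendsto (fun n : ℕ => (maxDeg (XT n ω) : ℝ) / Real.sqrt n)
        Filter.atTop (nhds (DmaxT ω))
    · left
      show t < DmaxT ω
      by_contra hle
      push_neg at hle
      have hev := hconv.eventually (eventually_lt_nhds (lt_of_le_of_lt hle hst))
      obtain ⟨N0, hN0⟩ := Filter.eventually_atTop.1 hev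
      have hω' := Set.mem_iInter.1 hω (max N0 1)
      simp only [hD, Set.mem_iUnion] at hω'
      obtain ⟨n, hn, hmem⟩ := hω'
      have hnN0 : N0 ≤ n := le_trans (le_max_left N0 1) (le_trans (le_max_left _ kT) hn)
      have hn1 : 1 ≤ n := le_trans (le_max_right N0 1) (le_trans (le_max_left _ kT) hn)
      have hsq : 0 < Real.sqrt n := Real.sqrt_pos.2 (by exact_mod_cast hn1)
      have h1 := hN0 n hnN0
      rw [hmemB] at hmem
      have h2 : (maxDeg (XT n ω) : ℝ) < s * Real.sqrt n := by
        have := (div_lt_iff₀ hsq).1 h1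
        linarith
      linarith
    · right; exact hconv
  have hTineq : PT (⋂ N, D N) ≤ PT {ω | t < DmaxT ω} := by
    calc PT (⋂ N, D N) ≤ PT ({ω | t < DmaxT ω} ∪ _) := measure_mono hsubT
      _ ≤ PT {ω | t < DmaxT ω} + PT _ := measure_union_le _ _
      _ = PT {ω | t < DmaxT ω} := by rw [hbadT, add_zero]
  have htendD : Filter.Tendsto (fun N => (PT (D N)).toReal) Filter.atTop
      (nhds ((PT (⋂ N, D N)).toReal)) :=
    (ENNReal.tendsto_toReal (measure_ne_top PT _)).comp
      (tendsto_measure_iInter_atTop hDnull hDanti ⟨0, measure_ne_top PT _⟩)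
  obtain ⟨N₂, hN₂⟩ := (htendD.eventually
    (eventually_lt_nhds (show (PT (⋂ N, D N)).toReal <
      (PT (⋂ N, D N)).toReal + ε / 4 by linarith))).exists
  have hDchain : (PT (D N₂)).toReal ≤ (PT {ω | t < DmaxT ω}).toReal + ε / 4 := by
    have h1 : (PT (⋂ N, D N)).toReal ≤ (PT {ω | t < DmaxT ω}).toReal :=
      ENNReal.toReal_mono (measure_ne_top PT _) hTineq
    linarith
  -- Step B : eventually d n < L + ε / 4
  have hbddd : Filter.IsBoundedUnder (· ≤ ·) Filter.atTop d :=
    Filter.isBoundedUnder_of ⟨2, fun n => hd_le n⟩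
  have hevd : ∀ᶠ n in Filter.atTop, d n < L + ε / 4 := by
    refine Filter.eventually_lt_of_limsup_lt ?_ hbddd
    rw [← hLlimsup]; linarith
  obtain ⟨N₀, hN₀⟩ := Filter.eventually_atTop.1 hevd
  -- choose a common large n
  set n : ℕ := N₀ + N₁ + N₂ + kS + kT with hn
  clear_value n
  have hnkS : kS ≤ n := by omega
  have hnkT : kT ≤ n := by omega
  have hchain1 : (PS (C N₁)).toReal ≤ (PS (A n)).toReal :=
    ENNReal.toReal_mono (measure_ne_top PS _) (measure_mono (hCsub N₁ n (by omega)))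
  have hchain2 : (PT (B n)).toReal ≤ (PT (D N₂)).toReal :=
    ENNReal.toReal_mono (measure_ne_top PT _)
      (measure_mono (hBsubD N₂ n (max_le (by omega) hnkT)))
  have hchain3 : (PS (A n)).toReal - (PT (B n)).toReal ≤ d n :=
    hTV n hnkS hnkT (s * Real.sqrt n)
  have hdn : d n < L + ε / 4 := hN₀ n (by omega)
  linarith

end
end

section
/- Fix positive integers a and b. Let B and Z be independent random variables with B ∼ Beta(a,b) and Z ∼ GGa(a+b+1, 2), and set V = 2BZ. Then for every t > 0, P(V > t) = (2^{−(a+b)} / Γ((a+b+1)/2)) · Σ_{j=0}^{a−1} Σ_{k=0}^{a+b−1−j} C(a+b−1, j) C(a+b−1−j, k) (−1)^{a+b−1−j−k} t^{a+b−1−k} A_{k+1}, where A_m = ∫_t^∞ y^m exp(−y²/4) dy and C(n,k) denotes a binomial coefficient. -/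
open MeasureTheory Filter Real
open scoped ENNReal

noncomputable section

/-- The beta distribution `Beta(a, b)`, with density proportional to
`x^(a-1) (1-x)^(b-1)` on `[0, 1]`. -/
def betaMeasure (a b : ℝ) : Measure ℝ :=
  volume.withDensity fun x =>
    ENNReal.ofReal (if 0 < x ∧ x < 1 then
      (Real.Gamma (a + b) / (Real.Gamma a * Real.Gamma b)) * x ^ (a - 1) * (1 - x) ^ (b - 1)
    else 0)

/-- The generalized gamma distribution `GGa(a, b)`, with density proportional to
`x^(a-1) exp(-x^b)` on `(0, ∞)`. -/
def ggaMeasure (a b : ℝ) : Measure ℝ :=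
  volume.withDensity fun x =>
    ENNReal.ofReal (if 0 < x then
      (b / Real.Gamma (a / b)) * x ^ (a - 1) * Real.exp (-(x ^ b))
    else 0)

/-- `A_m = ∫_t^∞ y^m exp(-y²/4) dy`. -/
def Aint (t : ℝ) (m : ℕ) : ℝ := ∫ y in Set.Ioi t, y ^ m * Real.exp (-y ^ 2 / 4)

lemma g_deriv (a n : ℕ) (u : ℝ) :
    HasDerivAt (fun u : ℝ => ∑ j ∈ Finset.range a, (n.choose j : ℝ) * u ^ j * (1 - u) ^ (n - j))
      (-(((n.choose a * a : ℕ) : ℝ) * u ^ (a - 1) * (1 - u) ^ (n - a))) u := by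
  set D : ℕ → ℝ := fun j => ((n.choose j * j : ℕ) : ℝ) * u ^ (j - 1) * (1 - u) ^ (n - j) with hD
  have key : ∀ j : ℕ, HasDerivAt (fun u : ℝ => (n.choose j : ℝ) * u ^ j * (1 - u) ^ (n - j))
      (D j - D (j + 1)) u := by
    intro j
    have hq : HasDerivAt (fun u : ℝ => (1 - u) ^ (n - j))
        (-(((n - j : ℕ) : ℝ) * (1 - u) ^ (n - j - 1))) u := by
      have := (hasDerivAt_pow (n - j) (1 - u)).comp u
        ((hasDerivAt_const u (1 : ℝ)).sub (hasDerivAt_id u))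
      simpa [Function.comp_def] using this
    have hp := hasDerivAt_pow j u
    have h : HasDerivAt (fun y : ℝ => (n.choose j : ℝ) * (y ^ j * (1 - y) ^ (n - j))) _ u :=
      (hp.mul hq).const_mul ((n.choose j : ℝ))
    convert h using 1
    · funext y; ring
    have hc : ((n.choose (j+1) * (j+1) : ℕ) : ℝ) = ((n.choose j * (n - j) : ℕ) : ℝ) := by
      exact_mod_cast congrArg (Nat.cast (R := ℝ)) (Nat.choose_succ_right_eq n j)
    have hnj : n - (j + 1) = n - j - 1 := by omega
    rw [hD]; simp only [hnj, hc]
    push_cast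
    ring
  have hsum : HasDerivAt (fun u : ℝ => ∑ j ∈ Finset.range a, (n.choose j : ℝ) * u ^ j * (1 - u) ^ (n - j)) (∑ j ∈ Finset.range a, (D j - D (j+1))) u := HasDerivAt.fun_sum (fun j _ => key j)
  have : ∑ j ∈ Finset.range a, (D j - D (j+1)) = D 0 - D a := Finset.sum_range_sub' D a
  rw [this] at hsum
  convert hsum using 1
  simp only [hD]
  push_cast
  ring

lemma beta_tail (a n : ℕ) (ha : 0 < a) (han : a ≤ n) (u : ℝ) (hu0 : 0 ≤ u) (hu1 : u ≤ 1) :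
    ∫ x in Set.Ioo u 1, ((n.choose a * a : ℕ) : ℝ) * x ^ (a - 1) * (1 - x) ^ (n - a) =
      ∑ j ∈ Finset.range a, (n.choose j : ℝ) * u ^ j * (1 - u) ^ (n - j) := by
  set g : ℝ → ℝ := fun u => ∑ j ∈ Finset.range a, (n.choose j : ℝ) * u ^ j * (1 - u) ^ (n - j)
    with hg
  have hderiv : ∀ x ∈ Set.uIcc u 1, HasDerivAt (fun y => -(g y))
      (((n.choose a * a : ℕ) : ℝ) * x ^ (a - 1) * (1 - x) ^ (n - a)) x := by
    intro x _
    simpa using (g_deriv a n x).fun_neg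
  have hcont : Continuous fun x : ℝ => ((n.choose a * a : ℕ) : ℝ) * x ^ (a - 1) * (1 - x) ^ (n - a) := by
    continuity
  have hint := intervalIntegral.integral_eq_sub_of_hasDerivAt hderiv
    (hcont.intervalIntegrable u 1)
  have hg1 : g 1 = 0 := by
    rw [hg]
    refine Finset.sum_eq_zero fun j hj => ?_
    have : n - j ≠ 0 := by
      rw [Finset.mem_range] at hj; omega
    simp [this]
  rw [intervalIntegral.integral_of_le hu1, MeasureTheory.integral_Ioc_eq_integral_Ioo] at hint
  rw [hint, hg1]
  ring

lemma gauss_int {c : ℝ} (hc : 0 < c) {s : ℝ} (hs : 0 < s) (m : ℕ) :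
    IntegrableOn (fun y : ℝ => y ^ m * Real.exp (-(c * y ^ 2))) (Set.Ioi s) := by
  have h := integrableOn_rpow_mul_exp_neg_mul_sq hc (s := (m : ℝ))
    (lt_of_lt_of_le (by norm_num) (Nat.cast_nonneg m))
  refine (h.mono_set (Set.Ioi_subset_Ioi hs.le)).congr_fun (fun y hy => ?_) measurableSet_Ioi
  beta_reduce
  rw [Real.rpow_natCast, neg_mul]

lemma beta_const (a b : ℕ) (ha : 0 < a) (hb : 0 < b) :
    Real.Gamma ((a : ℝ) + b) / (Real.Gamma a * Real.Gamma b) =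
      (((a + b - 1).choose a * a : ℕ) : ℝ) := by
  have h1 : ((a : ℝ) + b) = ((a + b - 1 : ℕ) : ℝ) + 1 := by
    rw [Nat.cast_sub (by omega)]; push_cast; ring
  have h2 : (a : ℝ) = ((a - 1 : ℕ) : ℝ) + 1 := by
    rw [Nat.cast_sub ha]; push_cast; ring
  have h3 : (b : ℝ) = ((b - 1 : ℕ) : ℝ) + 1 := by
    rw [Nat.cast_sub hb]; push_cast; ring
  rw [h1, h2, h3, Real.Gamma_nat_eq_factorial, Real.Gamma_nat_eq_factorial,
    Real.Gamma_nat_eq_factorial]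
  have key : (a + b - 1).choose a * a * ((a - 1).factorial * (b - 1).factorial) = (a + b - 1).factorial := by
    have h4 : (a + b - 1).choose a * a * ((a - 1).factorial * (b - 1).factorial) =
        (a + b - 1).choose a * (a * (a - 1).factorial) * (b - 1).factorial := by ring
    rw [h4, Nat.mul_factorial_pred ha.ne',
      show b - 1 = (a + b - 1) - a by omega]
    exact Nat.choose_mul_factorial_mul_factorial (by omega)
  have hne : ((a - 1).factorial : ℝ) * ((b - 1).factorial : ℝ) ≠ 0 := by positivity
  rw [div_eq_iff hne]
  exact_mod_cast (congrArg (Nat.cast (R := ℝ)) key).symm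

lemma beta_density_eq (a b : ℕ) (ha : 0 < a) (hb : 0 < b) (x : ℝ) :
    Real.Gamma ((a : ℝ) + b) / (Real.Gamma a * Real.Gamma b) * x ^ ((a : ℝ) - 1) *
        (1 - x) ^ ((b : ℝ) - 1) =
      (((a + b - 1).choose a * a : ℕ) : ℝ) * x ^ (a - 1) * (1 - x) ^ ((a + b - 1) - a) := by
  rw [beta_const a b ha hb]
  have h1 : ((a : ℝ) - 1) = ((a - 1 : ℕ) : ℝ) := by
    rw [Nat.cast_sub ha]; norm_num
  have h2 : ((b : ℝ) - 1) = (((a + b - 1) - a : ℕ) : ℝ) := by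
    rw [Nat.cast_sub (by omega)]; push_cast [Nat.cast_sub (by omega : 1 ≤ a + b)]; ring
  rw [h1, h2, Real.rpow_natCast, Real.rpow_natCast]

lemma Aint_integrable {t : ℝ} (ht : 0 < t) (m : ℕ) :
    IntegrableOn (fun y : ℝ => y ^ m * Real.exp (-y ^ 2 / 4)) (Set.Ioi t) := by
  refine (gauss_int (c := 4⁻¹) (by norm_num) ht m).congr_fun (fun y hy => ?_) measurableSet_Ioi
  congr 1
  ring

lemma per_j (t : ℝ) (ht : 0 < t) (m : ℕ) (c : ℝ) :
    ∫ z in Set.Ioi (t/2), c * (z * Real.exp (-z ^ 2) * (2 * z - t) ^ m) =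
      ∑ k ∈ Finset.range (m + 1),
        c / 4 * ((-1 : ℝ) ^ (k + m) * t ^ (m - k) * (m.choose k : ℝ)) * Aint t (k + 1) := by
  have hfun : ∀ z : ℝ, c * (z * Real.exp (-z ^ 2) * (2 * z - t) ^ m) =
      (fun y : ℝ => c * (y / 2 * Real.exp (-y ^ 2 / 4) * (y - t) ^ m)) (2 * z) := by
    intro z
    simp only
    have h1 : -(2 * z) ^ 2 / 4 = -z ^ 2 := by ring
    rw [h1]
    ring
  simp_rw [hfun]
  rw [MeasureTheory.integral_comp_mul_left_Ioi
    (fun y : ℝ => c * (y / 2 * Real.exp (-y ^ 2 / 4) * (y - t) ^ m)) (t/2) two_pos]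
  rw [show (2 : ℝ) * (t / 2) = t by ring]
  have hexp : ∀ y : ℝ, c * (y / 2 * Real.exp (-y ^ 2 / 4) * (y - t) ^ m) =
      ∑ k ∈ Finset.range (m + 1),
        (c / 2 * ((-1 : ℝ) ^ (k + m) * t ^ (m - k) * (m.choose k : ℝ))) *
          (y ^ (k + 1) * Real.exp (-y ^ 2 / 4)) := by
    intro y
    rw [sub_pow, Finset.mul_sum, Finset.mul_sum]
    refine Finset.sum_congr rfl fun k hk => ?_
    rw [pow_succ]
    ring
  simp_rw [hexp]
  rw [MeasureTheory.integral_finset_sum _ (fun k hk =>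
    ((Aint_integrable ht (k + 1)).const_mul _))]
  rw [smul_eq_mul, Finset.mul_sum]
  refine Finset.sum_congr rfl fun k hk => ?_
  rw [MeasureTheory.integral_const_mul]
  rw [show (∫ y in Set.Ioi t, y ^ (k+1) * Real.exp (-y ^ 2 / 4)) = Aint t (k+1) from rfl]
  ring

lemma zterm_integrable {t : ℝ} (ht : 0 < t) (m : ℕ) (c : ℝ) :
    IntegrableOn (fun z : ℝ => c * (z * Real.exp (-z ^ 2) * (2 * z - t) ^ m))
      (Set.Ioi (t/2)) := by
  have base : IntegrableOn (fun z : ℝ => z ^ (m + 1) * Real.exp (-(1 * z ^ 2)))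
      (Set.Ioi (t/2)) := gauss_int one_pos (by positivity) (m + 1)
  refine (base.const_mul (|c| * 2 ^ m)).mono' ?_ ?_
  · exact (Continuous.aestronglyMeasurable (by continuity)).restrict
  · filter_upwards [ae_restrict_mem measurableSet_Ioi] with z hz
    have hz0 : 0 < z := lt_trans (by positivity) hz
    have h1 : |2 * z - t| ≤ 2 * z := by
      rw [abs_le]; constructor <;> nlinarith [Set.mem_Ioi.mp hz]
    have h2 : |2 * z - t| ^ m ≤ (2 * z) ^ m := pow_le_pow_left₀ (abs_nonneg _) h1 m
    rw [Real.norm_eq_abs, abs_mul, abs_mul, abs_mul, abs_pow]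
    rw [abs_of_pos hz0, abs_of_pos (Real.exp_pos _)]
    calc |c| * (z * Real.exp (-z ^ 2) * |2 * z - t| ^ m)
        ≤ |c| * (z * Real.exp (-z ^ 2) * (2 * z) ^ m) := by
          apply mul_le_mul_of_nonneg_left _ (abs_nonneg c)
          apply mul_le_mul_of_nonneg_left h2 (by positivity)
      _ = |c| * 2 ^ m * (z ^ (m + 1) * Real.exp (-(1 * z ^ 2))) := by
          rw [mul_pow, one_mul, pow_succ]; ring

lemma main_calc (a b : ℕ) (ha : 0 < a) (hb : 0 < b) (t : ℝ) (ht : 0 < t) :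
    (∫ z in Set.Ioi (t/2), (2 / Real.Gamma (((a:ℝ) + b + 1) / 2)) * z ^ (a + b) *
        Real.exp (-z ^ 2) *
        ∑ j ∈ Finset.range a, ((a + b - 1).choose j : ℝ) * (t / (2 * z)) ^ j *
          (1 - t / (2 * z)) ^ (a + b - 1 - j)) =
      (1 / (2 : ℝ) ^ (a + b) / Real.Gamma (((a : ℝ) + b + 1) / 2)) *
        ∑ j ∈ Finset.range a, ∑ k ∈ Finset.range (a + b - j),
          ((a + b - 1).choose j : ℝ) * ((a + b - 1 - j).choose k : ℝ) *
            (-1 : ℝ) ^ (a + b - 1 - j - k) * t ^ (a + b - 1 - k) * Aint t (k + 1) := by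
  set n := a + b - 1 with hn
  set G := Real.Gamma (((a : ℝ) + b + 1) / 2) with hG
  have hG0 : 0 < G := Real.Gamma_pos_of_pos (by positivity)
  -- step 1: pointwise rewrite of the integrand on Ioi (t/2)
  have hpt : Set.EqOn
      (fun z : ℝ => (2 / G) * z ^ (a + b) * Real.exp (-z ^ 2) *
        ∑ j ∈ Finset.range a, (n.choose j : ℝ) * (t / (2 * z)) ^ j *
          (1 - t / (2 * z)) ^ (n - j))
      (fun z : ℝ => ∑ j ∈ Finset.range a,
        ((2 / G) * (n.choose j : ℝ) * t ^ j / 2 ^ n) *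
          (z * Real.exp (-z ^ 2) * (2 * z - t) ^ (n - j)))
      (Set.Ioi (t/2)) := by
    intro z hz
    have hz0 : 0 < z := lt_trans (by positivity) hz
    have h2z : (2 : ℝ) * z ≠ 0 := by positivity
    simp only [Finset.mul_sum]
    refine Finset.sum_congr rfl fun j hj => ?_
    have hj' : j ≤ n := by
      rw [Finset.mem_range] at hj; omega
    have h1 : 1 - t / (2 * z) = (2 * z - t) / (2 * z) := by field_simp
    have key : (t / (2 * z)) ^ j * ((2 * z - t) / (2 * z)) ^ (n - j) =
        t ^ j * (2 * z - t) ^ (n - j) / (2 * z) ^ n := by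
      rw [div_pow, div_pow, div_mul_div_comm, ← pow_add,
        show j + (n - j) = n from by omega]
    rw [mul_assoc ((n.choose j : ℝ)), h1, key, show (a + b) = n + 1 by omega, mul_pow]
    have h2 : (2:ℝ) ^ n ≠ 0 := by positivity
    have h3 : z ^ n ≠ 0 := by positivity
    field_simp
    ring
  rw [MeasureTheory.setIntegral_congr_fun measurableSet_Ioi hpt]
  rw [MeasureTheory.integral_finset_sum _ (fun j hj => zterm_integrable ht (n - j) _)]
  rw [Finset.mul_sum]
  refine Finset.sum_congr rfl fun j hj => ?_
  rw [Finset.mem_range] at hj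
  rw [per_j t ht (n - j) _, show n - j + 1 = a + b - j from by omega, Finset.mul_sum]
  refine Finset.sum_congr rfl fun k hk => ?_
  rw [Finset.mem_range] at hk
  have hkm : k ≤ n - j := by omega
  have hsign : (-1 : ℝ) ^ (k + (n - j)) = (-1 : ℝ) ^ (n - j - k) := by
    rw [show k + (n - j) = (n - j - k) + 2 * k from by omega, pow_add, pow_mul]
    norm_num
  have hpow : t ^ j * t ^ (n - j - k) = t ^ (n - k) := by
    rw [← pow_add, show j + (n - j - k) = n - k from by omega]
  have h2ab : (2 : ℝ) ^ (a + b) = 2 ^ n * 2 := by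
    rw [← pow_succ, show n + 1 = a + b from by omega]
  rw [hsign, ← hpow, h2ab]
  have hne : (2 : ℝ) ^ n ≠ 0 := by positivity
  field_simp
  ring

lemma beta_slice (a b : ℕ) (ha : 0 < a) (hb : 0 < b) (t : ℝ) (ht : 0 < t) (z : ℝ) :
    betaMeasure (a : ℝ) (b : ℝ) {x | t < 2 * x * z} =
      ENNReal.ofReal (if t / 2 < z then
        ∑ j ∈ Finset.range a, ((a + b - 1).choose j : ℝ) * (t / (2 * z)) ^ j *
          (1 - t / (2 * z)) ^ (a + b - 1 - j)
      else 0) := by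
  have hs : MeasurableSet {x : ℝ | t < 2 * x * z} := by
    have : {x : ℝ | t < 2 * x * z} = (fun x : ℝ => 2 * x * z) ⁻¹' Set.Ioi t := rfl
    rw [this]
    exact ((measurable_const.mul measurable_id).mul measurable_const) measurableSet_Ioi
  rw [betaMeasure, withDensity_apply _ hs]
  have hind : (fun x : ℝ => ENNReal.ofReal (if 0 < x ∧ x < 1 then
      (Real.Gamma ((a : ℝ) + b) / (Real.Gamma (a : ℝ) * Real.Gamma (b : ℝ))) *
        x ^ ((a : ℝ) - 1) * (1 - x) ^ ((b : ℝ) - 1) else 0)) =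
      (Set.Ioo (0 : ℝ) 1).indicator (fun x =>
        ENNReal.ofReal ((((a + b - 1).choose a * a : ℕ) : ℝ) * x ^ (a - 1) *
          (1 - x) ^ ((a + b - 1) - a))) := by
    funext x
    by_cases h : 0 < x ∧ x < 1 <;>
      simp [Set.indicator, Set.mem_Ioo, h, beta_density_eq a b ha hb x]
  rw [hind, lintegral_indicator measurableSet_Ioo, Measure.restrict_restrict measurableSet_Ioo]
  by_cases hzt : t / 2 < z
  · have hz0 : 0 < z := lt_trans (by positivity) hzt
    set u := t / (2 * z) with hu
    have hu0 : 0 < u := by positivity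
    have hu1 : u < 1 := by
      rw [hu, div_lt_one (by positivity)]
      linarith
    have hset : Set.Ioo (0:ℝ) 1 ∩ {x | t < 2 * x * z} = Set.Ioo u 1 := by
      ext x
      simp only [Set.mem_inter_iff, Set.mem_Ioo, Set.mem_setOf_eq]
      constructor
      · rintro ⟨⟨hx0, hx1⟩, hxs⟩
        refine ⟨?_, hx1⟩
        rw [hu, div_lt_iff₀ (by positivity)]
        linarith
      · rintro ⟨hxu, hx1⟩
        have hx0 : 0 < x := lt_trans hu0 hxu
        refine ⟨⟨hx0, hx1⟩, ?_⟩
        rw [hu, div_lt_iff₀ (by positivity)] at hxu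
        linarith
    rw [hset, if_pos hzt]
    have hcont : Continuous fun x : ℝ => (((a + b - 1).choose a * a : ℕ) : ℝ) * x ^ (a - 1) *
        (1 - x) ^ ((a + b - 1) - a) := by continuity
    have hint : IntegrableOn (fun x : ℝ => (((a + b - 1).choose a * a : ℕ) : ℝ) * x ^ (a - 1) *
        (1 - x) ^ ((a + b - 1) - a)) (Set.Ioo u 1) :=
      (hcont.integrableOn_Icc).mono_set Set.Ioo_subset_Icc_self
    have hnn : 0 ≤ᵐ[volume.restrict (Set.Ioo u 1)]
        fun x : ℝ => (((a + b - 1).choose a * a : ℕ) : ℝ) * x ^ (a - 1) *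
          (1 - x) ^ ((a + b - 1) - a) := by
      filter_upwards [ae_restrict_mem measurableSet_Ioo] with x hx
      have hx0 : 0 < x := lt_trans hu0 hx.1
      have hx1 : x < 1 := hx.2
      exact mul_nonneg (mul_nonneg (Nat.cast_nonneg _) (pow_nonneg hx0.le _))
        (pow_nonneg (by linarith) _)
    rw [← MeasureTheory.ofReal_integral_eq_lintegral_ofReal hint hnn,
      beta_tail a (a + b - 1) ha (by omega) u hu0.le hu1.le]
  · have hset : Set.Ioo (0:ℝ) 1 ∩ {x | t < 2 * x * z} = ∅ := by
      rw [Set.eq_empty_iff_forall_notMem]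
      rintro x ⟨⟨hx0, hx1⟩, hxs⟩
      simp only [Set.mem_setOf_eq] at hxs
      push_neg at hzt
      nlinarith
    rw [hset, if_neg hzt]
    simp

/-- If `B ~ Beta(a, b)` and `Z ~ GGa(a+b+1, 2)` are independent and `V = 2BZ`, then for
every `t > 0`,
`P(V > t) = (2^{-(a+b)}/Γ((a+b+1)/2)) ∑_{j=0}^{a-1} ∑_{k=0}^{a+b-1-j} C(a+b-1,j) C(a+b-1-j,k)
(-1)^{a+b-1-j-k} t^{a+b-1-k} A_{k+1}`, where `A_m = ∫_t^∞ y^m exp(-y²/4) dy`. -/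
theorem tail_two_mul_beta_gga_alternating_sum
    (a b : ℕ) (ha : 0 < a) (hb : 0 < b)
    {Ω : Type} [MeasurableSpace Ω] (P : Measure Ω) [IsProbabilityMeasure P]
    (B Z : Ω → ℝ)
    (hind : ProbabilityTheory.IndepFun B Z P)
    (hB : P.map B = betaMeasure (a : ℝ) (b : ℝ))
    (hZ : P.map Z = ggaMeasure ((a : ℝ) + b + 1) 2) :
    ∀ t : ℝ, 0 < t →
      (P {ω | t < 2 * B ω * Z ω}).toReal =
        (1 / (2 : ℝ) ^ (a + b) / Real.Gamma (((a : ℝ) + b + 1) / 2)) *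
          ∑ j ∈ Finset.range a, ∑ k ∈ Finset.range (a + b - j),
            ((a + b - 1).choose j : ℝ) * ((a + b - 1 - j).choose k : ℝ) *
              (-1 : ℝ) ^ (a + b - 1 - j - k) * t ^ (a + b - 1 - k) * Aint t (k + 1) := by
  intro t ht
  -- AEMeasurability of B and Z
  have hBm : AEMeasurable B P := by
    by_contra h
    rw [Measure.map_of_not_aemeasurable h] at hB
    have h2 : betaMeasure (a : ℝ) (b : ℝ) (Set.Ioo 0 1) = 0 := by rw [← hB]; simp
    have hK : 0 < Real.Gamma ((a : ℝ) + b) / (Real.Gamma a * Real.Gamma b) := by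
      have h1 : 0 < Real.Gamma ((a:ℝ) + b) := Real.Gamma_pos_of_pos (by positivity)
      have h2 : 0 < Real.Gamma (a:ℝ) := Real.Gamma_pos_of_pos (by exact_mod_cast ha)
      have h3 : 0 < Real.Gamma (b:ℝ) := Real.Gamma_pos_of_pos (by exact_mod_cast hb)
      positivity
    have hmeas : Measurable fun x : ℝ => ENNReal.ofReal (if 0 < x ∧ x < 1 then
        (Real.Gamma ((a:ℝ) + b) / (Real.Gamma (a:ℝ) * Real.Gamma (b:ℝ))) *
          x ^ ((a:ℝ) - 1) * (1 - x) ^ ((b:ℝ) - 1) else 0) := by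
      apply ENNReal.measurable_ofReal.comp
      apply Measurable.ite
      · exact (measurableSet_Ioi.inter measurableSet_Iio :
          MeasurableSet ({x : ℝ | 0 < x} ∩ {x : ℝ | x < 1}))
      · exact ((measurable_const.mul (measurable_id.pow_const _)).mul
          ((measurable_const.sub measurable_id).pow_const _))
      · exact measurable_const
    rw [betaMeasure, withDensity_apply _ measurableSet_Ioo,
      lintegral_eq_zero_iff hmeas] at h2
    have h3 : ∀ᵐ x ∂(volume.restrict (Set.Ioo (0:ℝ) 1)), False := by
      filter_upwards [h2, ae_restrict_mem measurableSet_Ioo] with x hx hmem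
      rw [Set.mem_Ioo] at hmem
      have hpos : 0 < (Real.Gamma ((a:ℝ) + b) / (Real.Gamma (a:ℝ) * Real.Gamma (b:ℝ))) *
          x ^ ((a:ℝ) - 1) * (1 - x) ^ ((b:ℝ) - 1) := by
        have := Real.rpow_pos_of_pos hmem.1 ((a:ℝ) - 1)
        have := Real.rpow_pos_of_pos (by linarith : (0:ℝ) < 1 - x) ((b:ℝ) - 1)
        positivity
      simp only [Pi.zero_apply] at hx
      rw [if_pos ⟨hmem.1, hmem.2⟩] at hx
      exact absurd hx (ENNReal.ofReal_pos.mpr hpos).ne'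
    rw [ae_iff] at h3
    simp only [not_false_iff, Set.setOf_true, Measure.restrict_apply_univ] at h3
    rw [Real.volume_Ioo] at h3
    norm_num at h3
  have hZm : AEMeasurable Z P := by
    by_contra h
    rw [Measure.map_of_not_aemeasurable h] at hZ
    have h2 : ggaMeasure ((a : ℝ) + b + 1) 2 (Set.Ioo 0 1) = 0 := by rw [← hZ]; simp
    have hmeas : Measurable fun x : ℝ => ENNReal.ofReal (if 0 < x then
        (2 / Real.Gamma (((a:ℝ) + b + 1) / 2)) * x ^ ((a:ℝ) + b + 1 - 1) *
          Real.exp (-(x ^ (2:ℝ))) else 0) := by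
      apply ENNReal.measurable_ofReal.comp
      apply Measurable.ite measurableSet_Ioi
      · exact ((measurable_const.mul (measurable_id.pow_const _)).mul
          ((measurable_id.pow_const _).neg.exp))
      · exact measurable_const
    rw [ggaMeasure, withDensity_apply _ measurableSet_Ioo,
      lintegral_eq_zero_iff hmeas] at h2
    have h3 : ∀ᵐ x ∂(volume.restrict (Set.Ioo (0:ℝ) 1)), False := by
      filter_upwards [h2, ae_restrict_mem measurableSet_Ioo] with x hx hmem
      rw [Set.mem_Ioo] at hmem
      have hG : 0 < Real.Gamma (((a:ℝ) + b + 1) / 2) :=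
        Real.Gamma_pos_of_pos (by positivity)
      have hpos : 0 < (2 / Real.Gamma (((a:ℝ) + b + 1) / 2)) *
          x ^ ((a:ℝ) + b + 1 - 1) * Real.exp (-(x ^ (2:ℝ))) := by
        have := Real.rpow_pos_of_pos hmem.1 ((a:ℝ) + b + 1 - 1)
        have := Real.exp_pos (-(x ^ (2:ℝ)))
        positivity
      simp only [Pi.zero_apply] at hx
      rw [if_pos hmem.1] at hx
      exact absurd hx (ENNReal.ofReal_pos.mpr hpos).ne'
    rw [ae_iff] at h3
    simp only [not_false_iff, Set.setOf_true, Measure.restrict_apply_univ] at h3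
    rw [Real.volume_Ioo] at h3
    norm_num at h3
  -- finiteness instances
  have hPB : IsProbabilityMeasure (betaMeasure (a : ℝ) (b : ℝ)) :=
    hB ▸ Measure.isProbabilityMeasure_map hBm
  have hPZ : IsProbabilityMeasure (ggaMeasure ((a : ℝ) + b + 1) 2) :=
    hZ ▸ Measure.isProbabilityMeasure_map hZm
  -- joint law
  have hmap : P.map (fun ω => (B ω, Z ω)) =
      (betaMeasure (a : ℝ) (b : ℝ)).prod (ggaMeasure ((a : ℝ) + b + 1) 2) := by
    rw [(ProbabilityTheory.indepFun_iff_map_prod_eq_prod_map_map hBm hZm).mp hind, hB, hZ]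
  have hS : MeasurableSet {p : ℝ × ℝ | t < 2 * p.1 * p.2} := by
    have : {p : ℝ × ℝ | t < 2 * p.1 * p.2} =
        (fun p : ℝ × ℝ => 2 * p.1 * p.2) ⁻¹' Set.Ioi t := rfl
    rw [this]
    exact ((measurable_const.mul measurable_fst).mul measurable_snd) measurableSet_Ioi
  have hstep1 : P {ω | t < 2 * B ω * Z ω} =
      ((betaMeasure (a : ℝ) (b : ℝ)).prod (ggaMeasure ((a : ℝ) + b + 1) 2))
        {p : ℝ × ℝ | t < 2 * p.1 * p.2} := by
    rw [← hmap, Measure.map_apply_of_aemeasurable (hBm.prodMk hZm) hS]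
    rfl
  have hS' : MeasurableSet {p : ℝ × ℝ | t < 2 * p.2 * p.1} := by
    have : {p : ℝ × ℝ | t < 2 * p.2 * p.1} =
        (fun p : ℝ × ℝ => 2 * p.2 * p.1) ⁻¹' Set.Ioi t := rfl
    rw [this]
    exact ((measurable_const.mul measurable_snd).mul measurable_fst) measurableSet_Ioi
  have hswap : ((betaMeasure (a : ℝ) (b : ℝ)).prod (ggaMeasure ((a : ℝ) + b + 1) 2))
        {p : ℝ × ℝ | t < 2 * p.1 * p.2} =
      ((ggaMeasure ((a : ℝ) + b + 1) 2).prod (betaMeasure (a : ℝ) (b : ℝ)))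
        {p : ℝ × ℝ | t < 2 * p.2 * p.1} := by
    rw [← Measure.prod_swap, Measure.map_apply measurable_swap hS]
    rfl
  have hprod : ((ggaMeasure ((a : ℝ) + b + 1) 2).prod (betaMeasure (a : ℝ) (b : ℝ)))
        {p : ℝ × ℝ | t < 2 * p.2 * p.1} =
      ∫⁻ z, betaMeasure (a : ℝ) (b : ℝ) {x | t < 2 * x * z}
        ∂(ggaMeasure ((a : ℝ) + b + 1) 2) := by
    rw [Measure.prod_apply hS']
    rfl
  set g : ℝ → ℝ := fun z => ∑ j ∈ Finset.range a, ((a + b - 1).choose j : ℝ) *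
      (t / (2 * z)) ^ j * (1 - t / (2 * z)) ^ (a + b - 1 - j) with hg
  have hgmeas : Measurable g := by
    apply Finset.measurable_sum
    intro j _
    exact ((measurable_const.mul ((measurable_const.div
      (measurable_const.mul measurable_id)).pow_const _)).mul
      ((measurable_const.sub (measurable_const.div
        (measurable_const.mul measurable_id))).pow_const _))
  have hTmeas : Measurable fun z : ℝ => ENNReal.ofReal (if t / 2 < z then g z else 0) :=
    ENNReal.measurable_ofReal.comp (Measurable.ite measurableSet_Ioi hgmeas measurable_const)
  have hfZmeas : Measurable fun x : ℝ => ENNReal.ofReal (if 0 < x then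
      (2 / Real.Gamma (((a:ℝ) + b + 1) / 2)) * x ^ ((a:ℝ) + b + 1 - 1) *
        Real.exp (-(x ^ (2:ℝ))) else 0) := by
    apply ENNReal.measurable_ofReal.comp
    apply Measurable.ite measurableSet_Ioi
    · exact ((measurable_const.mul (measurable_id.pow_const _)).mul
        ((measurable_id.pow_const _).neg.exp))
    · exact measurable_const
  have hG : 0 < Real.Gamma (((a:ℝ) + b + 1) / 2) := Real.Gamma_pos_of_pos (by positivity)
  -- nonnegativity and bound for g on (t/2, ∞)
  have hgnn : ∀ z : ℝ, t / 2 < z → 0 ≤ g z := by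
    intro z hz
    have hz0 : 0 < z := lt_trans (by positivity) hz
    have hu0 : 0 ≤ t / (2 * z) := by positivity
    have hu1 : t / (2 * z) ≤ 1 := by
      rw [div_le_one (by positivity)]; linarith
    apply Finset.sum_nonneg
    intro j _
    have : (0:ℝ) ≤ 1 - t / (2 * z) := by linarith
    positivity
  have hstep2 : (∫⁻ z, betaMeasure (a : ℝ) (b : ℝ) {x | t < 2 * x * z}
        ∂(ggaMeasure ((a : ℝ) + b + 1) 2)) =
      ENNReal.ofReal (∫ z in Set.Ioi (t/2),
        (2 / Real.Gamma (((a:ℝ) + b + 1) / 2)) * z ^ (a + b) * Real.exp (-z ^ 2) * g z) := by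
    simp_rw [beta_slice a b ha hb t ht]
    rw [ggaMeasure, lintegral_withDensity_eq_lintegral_mul _ hfZmeas hTmeas]
    have hind2 : ∀ z : ℝ, ENNReal.ofReal (if 0 < z then
        (2 / Real.Gamma (((a:ℝ) + b + 1) / 2)) * z ^ ((a:ℝ) + b + 1 - 1) *
          Real.exp (-(z ^ (2:ℝ))) else 0) *
        ENNReal.ofReal (if t / 2 < z then g z else 0) =
      (Set.Ioi (t/2)).indicator (fun z => ENNReal.ofReal
        ((2 / Real.Gamma (((a:ℝ) + b + 1) / 2)) * z ^ (a + b) * Real.exp (-z ^ 2) * g z)) z := by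
      intro z
      by_cases hzt : t / 2 < z
      · have hz0 : 0 < z := lt_trans (by positivity) hzt
        rw [Set.indicator_of_mem (Set.mem_Ioi.mpr hzt), if_pos hzt, if_pos hz0]
        have e1 : z ^ ((a:ℝ) + b + 1 - 1) = z ^ (a + b) := by
          rw [show (a:ℝ) + b + 1 - 1 = ((a + b : ℕ) : ℝ) by push_cast; ring,
            Real.rpow_natCast]
        have e2 : z ^ (2:ℝ) = z ^ (2:ℕ) := by
          rw [show (2:ℝ) = ((2:ℕ) : ℝ) by norm_num, Real.rpow_natCast]
        rw [e1, e2, ← ENNReal.ofReal_mul (by positivity)]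
      · rw [Set.indicator_of_notMem (by simpa using hzt), if_neg hzt]
        simp
    simp only [Pi.mul_apply]
    simp_rw [hind2]
    rw [lintegral_indicator measurableSet_Ioi]
    rw [← MeasureTheory.ofReal_integral_eq_lintegral_ofReal]
    · have base : IntegrableOn (fun z : ℝ => z ^ (a + b) * Real.exp (-(1 * z ^ 2)))
          (Set.Ioi (t/2)) := gauss_int one_pos (by positivity) (a + b)
      set M : ℝ := (2 / Real.Gamma (((a:ℝ) + b + 1) / 2)) *
        ∑ j ∈ Finset.range a, ((a + b - 1).choose j : ℝ) with hM
      refine (base.const_mul M).mono' ?_ ?_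
      · refine (Measurable.aestronglyMeasurable ?_).restrict
        exact ((measurable_const.mul (measurable_id.pow_const _)).mul
          ((measurable_id.pow_const _).neg.exp)).mul hgmeas
      · filter_upwards [ae_restrict_mem measurableSet_Ioi] with z hz
        have hzt : t / 2 < z := hz
        have hz0 : 0 < z := lt_trans (by positivity) hzt
        have hu0 : 0 ≤ t / (2 * z) := by positivity
        have hu1 : t / (2 * z) ≤ 1 := by
          rw [div_le_one (by positivity)]; linarith
        have hgle : g z ≤ ∑ j ∈ Finset.range a, ((a + b - 1).choose j : ℝ) := by
          rw [hg]
          refine Finset.sum_le_sum fun j _ => ?_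
          have h1 : (t / (2 * z)) ^ j ≤ 1 := pow_le_one₀ hu0 hu1
          have h2 : (1 - t / (2 * z)) ^ (a + b - 1 - j) ≤ 1 :=
            pow_le_one₀ (by linarith) (by linarith)
          calc ((a + b - 1).choose j : ℝ) * (t / (2 * z)) ^ j *
                (1 - t / (2 * z)) ^ (a + b - 1 - j)
              ≤ ((a + b - 1).choose j : ℝ) * 1 * 1 := by
                apply mul_le_mul (mul_le_mul le_rfl h1 (by positivity)
                  (Nat.cast_nonneg _)) h2 (pow_nonneg (by linarith) _) (by positivity)
            _ = ((a + b - 1).choose j : ℝ) := by ring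
        rw [Real.norm_eq_abs, abs_of_nonneg (mul_nonneg (by positivity) (hgnn z hzt))]
        calc (2 / Real.Gamma (((a:ℝ) + b + 1) / 2)) * z ^ (a + b) *
              Real.exp (-z ^ 2) * g z
              ≤ (2 / Real.Gamma (((a:ℝ) + b + 1) / 2)) * z ^ (a + b) *
              Real.exp (-z ^ 2) * (∑ j ∈ Finset.range a, ((a + b - 1).choose j : ℝ)) := by
                apply mul_le_mul_of_nonneg_left hgle (by positivity)
          _ = M * (z ^ (a + b) * Real.exp (-(1 * z ^ 2))) := by
                rw [one_mul]; ring
    · filter_upwards [ae_restrict_mem measurableSet_Ioi] with z hz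
      have hz0 : 0 < z := lt_trans (by positivity) hz
      have := hgnn z hz
      positivity
  have hintnn : 0 ≤ ∫ z in Set.Ioi (t/2),
      (2 / Real.Gamma (((a:ℝ) + b + 1) / 2)) * z ^ (a + b) * Real.exp (-z ^ 2) * g z :=
    setIntegral_nonneg measurableSet_Ioi fun z hz => by
      have hz0 : 0 < z := lt_trans (by positivity) hz
      exact mul_nonneg (by positivity) (hgnn z hz)
  rw [hstep1, hswap, hprod, hstep2, ENNReal.toReal_ofReal hintnn]
  simp only [hg]
  exact main_calc a b ha hb t ht

end
end

section
/- For all positive integers a and b and every integer j with 0 ≤ j ≤ a−1, Σ_{k=0}^{a+b−1−j} C(a+b−1−j, k) (−1)^{a+b−1−j−k} t^{a+b−1−k} ∫_t^∞ y^{k+1} exp(−y²/4) dy ∼ 2^{a+b−j} (a+b−1−j)! · t^{−(a+b−1−2j)} · exp(−t²/4) as t → ∞, where C(n,k) denotes a binomial coefficient and f(t) ∼ g(t) means f(t)/g(t) → 1. -/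
open MeasureTheory Filter Real
open scoped ENNReal

noncomputable section

lemma gauss_intOn (t : ℝ) (m : ℕ) :
    MeasureTheory.IntegrableOn (fun y : ℝ => y ^ m * Real.exp (-y ^ 2 / 4)) (Set.Ioi t) := by
  have h0 : MeasureTheory.IntegrableOn (fun y : ℝ => y ^ m * Real.exp (-y ^ 2 / 4))
      (Set.Ioi (0 : ℝ)) := by
    have h := integrableOn_rpow_mul_exp_neg_mul_sq (b := (4:ℝ)⁻¹) (by norm_num)
      (s := (m : ℝ)) (by exact_mod_cast neg_one_lt_zero.trans_le (Nat.cast_nonneg m))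
    refine h.congr_fun (fun x hx => ?_) measurableSet_Ioi
    simp only [Real.rpow_natCast]
    congr 1
    ring_nf
  have hsub : Set.Ioi t = Set.Ioc t (max t 0) ∪ Set.Ioi (max t 0) :=
    (Set.Ioc_union_Ioi_eq_Ioi (le_max_left _ _)).symm
  rw [hsub]
  refine MeasureTheory.IntegrableOn.union ?_ ?_
  · exact (Continuous.mul (continuous_pow m)
      (Real.continuous_exp.comp (by continuity))).integrableOn_Ioc
  · exact h0.mono_set (Set.Ioi_subset_Ioi (le_max_right _ _))

lemma sum_eq_integral (n : ℕ) (t : ℝ) :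
    ∑ k ∈ Finset.range (n + 1),
        (n.choose k : ℝ) * (-1 : ℝ) ^ (n - k) * t ^ (n - k) * Aint t (k + 1)
      = ∫ y in Set.Ioi t, y * (y - t) ^ n * Real.exp (-y ^ 2 / 4) := by
  have expand : ∀ y : ℝ, y * (y - t) ^ n * Real.exp (-y ^ 2 / 4)
      = ∑ m ∈ Finset.range (n + 1),
          ((n.choose m : ℝ) * (-1 : ℝ) ^ (n - m) * t ^ (n - m)) *
            (y ^ (m + 1) * Real.exp (-y ^ 2 / 4)) := by
    intro y
    rw [sub_pow, Finset.mul_sum, Finset.sum_mul]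
    refine Finset.sum_congr rfl fun m hm => ?_
    rw [Finset.mem_range] at hm
    have hsign : (-1 : ℝ) ^ (m + n) = (-1) ^ (n - m) := by
      rw [show m + n = (n - m) + 2 * m by omega, pow_add, pow_mul]
      simp
    rw [hsign, pow_succ]
    ring
  calc ∑ k ∈ Finset.range (n + 1),
        (n.choose k : ℝ) * (-1 : ℝ) ^ (n - k) * t ^ (n - k) * Aint t (k + 1)
      = ∑ k ∈ Finset.range (n + 1),
          ∫ y in Set.Ioi t, ((n.choose k : ℝ) * (-1 : ℝ) ^ (n - k) * t ^ (n - k)) *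
            (y ^ (k + 1) * Real.exp (-y ^ 2 / 4)) := by
        refine Finset.sum_congr rfl fun k _ => ?_
        rw [MeasureTheory.integral_const_mul]
        unfold Aint
        ring
    _ = ∫ y in Set.Ioi t, ∑ k ∈ Finset.range (n + 1),
          ((n.choose k : ℝ) * (-1 : ℝ) ^ (n - k) * t ^ (n - k)) *
            (y ^ (k + 1) * Real.exp (-y ^ 2 / 4)) := by
        rw [MeasureTheory.integral_finset_sum]
        intro k _
        exact ((gauss_intOn t (k + 1)).const_mul _)
    _ = ∫ y in Set.Ioi t, y * (y - t) ^ n * Real.exp (-y ^ 2 / 4) := by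
        refine MeasureTheory.integral_congr_ae (Eventually.of_forall fun y => ?_)
        exact (expand y).symm

lemma integral_Ioi_shift (f : ℝ → ℝ) (t : ℝ) :
    ∫ y in Set.Ioi t, f y = ∫ u in Set.Ioi (0 : ℝ), f (u + t) := by
  rw [← MeasureTheory.integral_indicator measurableSet_Ioi,
      ← MeasureTheory.integral_indicator measurableSet_Ioi,
      ← MeasureTheory.integral_add_right_eq_self (μ := volume)
        (fun y => (Set.Ioi t).indicator f y) t]
  congr 1
  ext u
  by_cases h : 0 < u
  · rw [Set.indicator_of_mem (by simpa using h), Set.indicator_of_mem (by simpa using h)]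
  · rw [Set.indicator_of_notMem (by simpa using h), Set.indicator_of_notMem (by simpa using h)]

lemma phi_eq (n : ℕ) {t : ℝ} (ht : 0 < t) :
    ∫ y in Set.Ioi t, y * (y - t) ^ n * Real.exp (-y ^ 2 / 4)
      = 2 ^ (n + 1) * (t ^ n)⁻¹ * Real.exp (-t ^ 2 / 4) *
        ∫ v in Set.Ioi (0 : ℝ),
          (1 + 2 * v / t ^ 2) * v ^ n * Real.exp (-v - v ^ 2 / t ^ 2) := by
  have htne : t ≠ 0 := ht.ne'
  rw [integral_Ioi_shift]
  simp only [add_sub_cancel_right]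
  have h2t : (0 : ℝ) < 2 / t := by positivity
  have hsub := MeasureTheory.integral_comp_mul_left_Ioi
    (fun u => (u + t) * u ^ n * Real.exp (-(u + t) ^ 2 / 4)) 0 h2t
  rw [mul_zero] at hsub
  have hre : ∫ u in Set.Ioi (0 : ℝ), (u + t) * u ^ n * Real.exp (-(u + t) ^ 2 / 4)
      = (2 / t) • ∫ x in Set.Ioi (0 : ℝ),
          (2 / t * x + t) * (2 / t * x) ^ n * Real.exp (-(2 / t * x + t) ^ 2 / 4) := by
    rw [hsub, smul_smul, mul_inv_cancel₀ h2t.ne', one_smul]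
  rw [hre]
  have key : ∀ x : ℝ, (2 / t * x + t) * (2 / t * x) ^ n * Real.exp (-(2 / t * x + t) ^ 2 / 4)
      = (t * Real.exp (-t ^ 2 / 4) * (2 / t) ^ n) *
          ((1 + 2 * x / t ^ 2) * x ^ n * Real.exp (-x - x ^ 2 / t ^ 2)) := by
    intro x
    have he : Real.exp (-(2 / t * x + t) ^ 2 / 4)
        = Real.exp (-t ^ 2 / 4) * Real.exp (-x - x ^ 2 / t ^ 2) := by
      rw [← Real.exp_add]
      congr 1
      field_simp
      ring
    rw [he, mul_pow]
    have h1 : 2 / t * x + t = t * (1 + 2 * x / t ^ 2) := by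
      field_simp
      ring
    rw [h1]
    ring
  simp_rw [key]
  rw [MeasureTheory.integral_const_mul, smul_eq_mul]
  rw [div_pow]
  field_simp
  ring

set_option maxHeartbeats 1000000 in
lemma G_tendsto (n : ℕ) :
    Tendsto (fun t : ℝ => ∫ v in Set.Ioi (0 : ℝ),
        (1 + 2 * v / t ^ 2) * v ^ n * Real.exp (-v - v ^ 2 / t ^ 2))
      atTop (nhds (n.factorial : ℝ)) := by
  have hint_pow : ∀ m : ℕ, MeasureTheory.IntegrableOn
      (fun v : ℝ => v ^ m * Real.exp (-v)) (Set.Ioi (0 : ℝ)) := by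
    intro m
    have h := Real.GammaIntegral_convergent (s := (m : ℝ) + 1) (by positivity)
    refine h.congr_fun (fun x hx => ?_) measurableSet_Ioi
    simp only [add_sub_cancel_right, Real.rpow_natCast]
    ring
  have hval : ∫ v in Set.Ioi (0 : ℝ), v ^ n * Real.exp (-v) = (n.factorial : ℝ) := by
    have h := Real.integral_rpow_mul_exp_neg_mul_Ioi (a := (n : ℝ) + 1) (r := 1)
      (by positivity) one_pos
    rw [add_sub_cancel_right] at h
    simp only [one_mul, one_div, inv_one, Real.one_rpow] at h
    rw [Real.Gamma_nat_eq_factorial] at h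
    rw [← h]
    refine MeasureTheory.setIntegral_congr_fun measurableSet_Ioi fun x hx => ?_
    rw [Real.rpow_natCast]
  rw [← hval]
  have hbound : MeasureTheory.IntegrableOn
      (fun v : ℝ => (1 + 2 * v) * v ^ n * Real.exp (-v)) (Set.Ioi (0 : ℝ)) := by
    have h := (hint_pow n).add ((hint_pow (n + 1)).const_mul 2)
    refine MeasureTheory.IntegrableOn.congr_fun h (fun x hx => ?_) measurableSet_Ioi
    simp only [Pi.add_apply]
    ring
  refine MeasureTheory.tendsto_integral_filter_of_dominated_convergence
    (fun v => (1 + 2 * v) * v ^ n * Real.exp (-v)) ?_ ?_ hbound ?_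
  · filter_upwards [eventually_ge_atTop (1 : ℝ)] with t ht
    have htc : Continuous (fun v : ℝ => (1 + 2 * v / t ^ 2) * v ^ n * Real.exp (-v - v ^ 2 / t ^ 2)) := by
      fun_prop
    exact htc.aestronglyMeasurable
  · filter_upwards [eventually_ge_atTop (1 : ℝ)] with t ht
    refine (MeasureTheory.ae_restrict_iff' measurableSet_Ioi).2 (Eventually.of_forall fun v hv => ?_)
    have hv0 : 0 < v := hv
    have ht2 : (1 : ℝ) ≤ t ^ 2 := one_le_pow₀ ht
    have h1 : (0 : ℝ) < 1 + 2 * v / t ^ 2 := by positivity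
    rw [Real.norm_eq_abs, abs_of_nonneg (by positivity)]
    have hA : 1 + 2 * v / t ^ 2 ≤ 1 + 2 * v := by
      have : 2 * v / t ^ 2 ≤ 2 * v := by
        rw [div_le_iff₀ (by positivity)]
        nlinarith
      linarith
    have hB : Real.exp (-v - v ^ 2 / t ^ 2) ≤ Real.exp (-v) := by
      apply Real.exp_le_exp.2
      have : 0 ≤ v ^ 2 / t ^ 2 := by positivity
      linarith
    have hv0' : (0:ℝ) ≤ v ^ n := by positivity
    calc (1 + 2 * v / t ^ 2) * v ^ n * Real.exp (-v - v ^ 2 / t ^ 2)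
        ≤ (1 + 2 * v) * v ^ n * Real.exp (-v - v ^ 2 / t ^ 2) := by
          apply mul_le_mul_of_nonneg_right _ (Real.exp_nonneg _)
          exact mul_le_mul_of_nonneg_right hA hv0'
      _ ≤ (1 + 2 * v) * v ^ n * Real.exp (-v) := by
          apply mul_le_mul_of_nonneg_left hB
          positivity
  · refine (MeasureTheory.ae_restrict_iff' measurableSet_Ioi).2 (Eventually.of_forall fun v hv => ?_)
    have hsq : Tendsto (fun t : ℝ => (t ^ 2)⁻¹) atTop (nhds 0) :=
      (tendsto_pow_atTop (by norm_num)).inv_tendsto_atTop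
    have h1 : Tendsto (fun t : ℝ => 1 + 2 * v / t ^ 2) atTop (nhds 1) := by
      have : Tendsto (fun t : ℝ => 2 * v / t ^ 2) atTop (nhds 0) := by
        simp_rw [div_eq_mul_inv]
        simpa using hsq.const_mul (2 * v)
      simpa using (tendsto_const_nhds.add this)
    have h2 : Tendsto (fun t : ℝ => Real.exp (-v - v ^ 2 / t ^ 2)) atTop (nhds (Real.exp (-v))) := by
      have : Tendsto (fun t : ℝ => -v - v ^ 2 / t ^ 2) atTop (nhds (-v)) := by
        simp_rw [div_eq_mul_inv]
        have := hsq.const_mul (v ^ 2)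
        simpa using (tendsto_const_nhds.sub this)
      exact (Real.continuous_exp.continuousAt.tendsto.comp this)
    have h3 := (h1.mul (tendsto_const_nhds (x := v ^ n))).mul h2
    simpa using h3

/-- For positive integers `a, b` and `0 ≤ j ≤ a-1`,
`∑_{k=0}^{a+b-1-j} C(a+b-1-j,k) (-1)^{a+b-1-j-k} t^{a+b-1-k} ∫_t^∞ y^{k+1} e^{-y²/4} dy
 ∼ 2^{a+b-j} (a+b-1-j)! t^{-(a+b-1-2j)} e^{-t²/4}` as `t → ∞`. -/
theorem alternating_sum_Aint_asymptotic
    (a b : ℕ) (ha : 0 < a) (hb : 0 < b) (j : ℕ) (hj : j ≤ a - 1) :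
    Filter.Tendsto (fun t : ℝ =>
        (∑ k ∈ Finset.range (a + b - j),
            ((a + b - 1 - j).choose k : ℝ) * (-1 : ℝ) ^ (a + b - 1 - j - k) *
              t ^ (a + b - 1 - k) * Aint t (k + 1)) /
          ((2 : ℝ) ^ (a + b - j) * (Nat.factorial (a + b - 1 - j) : ℝ) *
            t ^ (-((a : ℝ) + b - 1 - 2 * j)) * Real.exp (-t ^ 2 / 4)))
      Filter.atTop (nhds 1) := by
  set n := a + b - 1 - j with hn
  have hja : j + 1 ≤ a := by omega
  have hcast : (n : ℝ) + j + 1 = (a : ℝ) + b := by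
    have h1 : n + j + 1 = a + b := by omega
    exact_mod_cast congrArg (Nat.cast : ℕ → ℝ) h1
  have hev : (fun t : ℝ =>
        (∑ k ∈ Finset.range (a + b - j),
            ((n).choose k : ℝ) * (-1 : ℝ) ^ (n - k) *
              t ^ (a + b - 1 - k) * Aint t (k + 1)) /
          ((2 : ℝ) ^ (a + b - j) * (Nat.factorial n : ℝ) *
            t ^ (-((a : ℝ) + b - 1 - 2 * j)) * Real.exp (-t ^ 2 / 4)))
      =ᶠ[atTop] (fun t : ℝ =>
        (∫ v in Set.Ioi (0 : ℝ),
            (1 + 2 * v / t ^ 2) * v ^ n * Real.exp (-v - v ^ 2 / t ^ 2)) /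
          (n.factorial : ℝ)) := by
    filter_upwards [eventually_gt_atTop (0 : ℝ)] with t ht
    have htn : (0 : ℝ) < t ^ n := pow_pos ht n
    have htj : (0 : ℝ) < t ^ j := pow_pos ht j
    have hnum : (∑ k ∈ Finset.range (a + b - j),
          ((n).choose k : ℝ) * (-1 : ℝ) ^ (n - k) * t ^ (a + b - 1 - k) * Aint t (k + 1))
        = t ^ j * (2 ^ (n + 1) * (t ^ n)⁻¹ * Real.exp (-t ^ 2 / 4) *
            ∫ v in Set.Ioi (0 : ℝ),
              (1 + 2 * v / t ^ 2) * v ^ n * Real.exp (-v - v ^ 2 / t ^ 2)) := by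
      rw [← phi_eq n ht, ← sum_eq_integral n t, Finset.mul_sum,
        show a + b - j = n + 1 by omega]
      refine Finset.sum_congr rfl fun k hk => ?_
      rw [Finset.mem_range] at hk
      rw [show a + b - 1 - k = j + (n - k) by omega, pow_add]
      ring
    rw [hnum]
    have hrw : -((a : ℝ) + b - 1 - 2 * j) = (j : ℝ) - (n : ℝ) := by linarith
    have hden : t ^ (-((a : ℝ) + b - 1 - 2 * j)) = t ^ j * (t ^ n)⁻¹ := by
      rw [hrw, Real.rpow_sub ht, Real.rpow_natCast, Real.rpow_natCast, div_eq_mul_inv]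
    rw [hden, show a + b - j = n + 1 by omega]
    have hexp : (0 : ℝ) < Real.exp (-t ^ 2 / 4) := Real.exp_pos _
    have hfac : (0 : ℝ) < (n.factorial : ℝ) := by exact_mod_cast n.factorial_pos
    field_simp
  refine Tendsto.congr' hev.symm ?_
  have h := (G_tendsto n).div_const (n.factorial : ℝ)
  have hfac : ((n.factorial : ℝ)) ≠ 0 := by exact_mod_cast n.factorial_pos.ne'
  rw [div_self hfac] at h
  exact h

end
end

section
/- For all integers r ≥ 0 and u with 1 ≤ u ≤ 2r, Σ_{k=2u}^{2r+1} C(2r+1, k) (−1)^{k+1} · k(k−2)(k−4)⋯(k−2(u−1)) = − Σ_{ℓ=0}^{u−1} C(2r+1, 2ℓ+1) (2ℓ+1)!! (2(u−1−ℓ)−1)!! (−1)^{u−1−ℓ}, where k(k−2)⋯(k−2(u−1)) denotes the product of the u integers k, k−2, …, k−2(u−1), and C(n,k) denotes a binomial coefficient. -/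
open MeasureTheory Filter Real
open scoped ENNReal

noncomputable section

section MyAux
open Finset Polynomial


lemma myB (m : ℕ) : ∏ i ∈ Finset.range m, (2*i+1) = Nat.doubleFactorial (2*m - 1) := by
  cases m with
  | zero => simp [Nat.doubleFactorial]
  | succ m =>
    have h : 2*(m+1) - 1 = 2*m+1 := by omega
    rw [h, Nat.doubleFactorial_eq_prod_odd, Finset.prod_range_succ']
    simp

lemma myA (l : ℕ) : ∏ i ∈ Finset.range (l+1), ((2*l+1 : ℤ) - 2*i) = ((2*l+1).doubleFactorial : ℤ) := by
  have h1 : ∏ i ∈ Finset.range (l+1), ((2*l+1 : ℤ) - 2*i)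
      = ∏ i ∈ Finset.range (l+1), ((2*(l-i)+1 : ℕ) : ℤ) := by
    apply Finset.prod_congr rfl
    intro i hi
    have hi' : i ≤ l := by simpa [Nat.lt_succ_iff] using hi
    push_cast [Nat.cast_sub hi']
    ring
  rw [h1, ← Nat.cast_prod]
  congr 1
  have h2 := Finset.prod_range_reflect (fun i => 2*i+1) (l+1)
  simp only [Nat.succ_sub_one] at h2
  rw [h2]
  have := myB (l+1)
  rw [show 2*(l+1)-1 = 2*l+1 by omega] at this
  exact this

lemma myProd (u l : ℕ) (h : l < u) :
    ∏ i ∈ Finset.range u, ((2*l+1 : ℤ) - 2*i)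
      = ((2*l+1).doubleFactorial : ℤ) * ((2*(u-1-l)-1).doubleFactorial : ℤ) * (-1)^(u-1-l) := by
  obtain ⟨m, rfl⟩ : ∃ m, u = l + 1 + m := ⟨u - 1 - l, by omega⟩
  rw [Finset.prod_range_add, myA]
  have h2 : ∏ i ∈ Finset.range m, ((2*l+1 : ℤ) - 2*(l+1+i))
      = (-1)^m * ((2*m-1).doubleFactorial : ℤ) := by
    have : ∀ i ∈ Finset.range m, (2*(l:ℤ)+1 - 2*((l:ℤ)+1+(i:ℤ))) = (-1) * ((2*i+1 : ℕ) : ℤ) := by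
      intro i _; push_cast; ring
    rw [Finset.prod_congr rfl this, Finset.prod_mul_distrib, Finset.prod_const,
      Finset.card_range, ← Nat.cast_prod, myB]
  push_cast at h2 ⊢
  rw [h2, show l + 1 + m - 1 - l = m by omega]
  ring

lemma myPair (m : ℕ) (f : ℕ → ℤ) :
    ∑ k ∈ Finset.range (2*m), f k = ∑ l ∈ Finset.range m, (f (2*l) + f (2*l+1)) := by
  induction m with
  | zero => simp
  | succ m ih =>
    rw [show 2*(m+1) = 2*m+1+1 by ring, Finset.sum_range_succ, Finset.sum_range_succ, ih,
      Finset.sum_range_succ]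
    ring

lemma myNegOne {a b : ℕ} (h : a % 2 = b % 2) : (-1 : ℤ)^a = (-1 : ℤ)^b := by
  rw [← Nat.div_add_mod a 2, ← Nat.div_add_mod b 2, pow_add, pow_add, pow_mul, pow_mul]
  simp [h]

lemma myIterZero : ∀ m : ℕ, (fwdDiff (1:ℕ))^[m] (0 : ℕ → ℤ) = 0 := by
  intro m
  induction m with
  | zero => simp
  | succ m ih =>
    rw [Function.iterate_succ_apply]
    have : fwdDiff (1:ℕ) (0 : ℕ → ℤ) = 0 := by funext k; simp [fwdDiff]
    rw [this, ih]

lemma myFdZero : ∀ (n : ℕ) (p : Polynomial ℤ), p.natDegree < n →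
    (fwdDiff (1:ℕ))^[n] (fun k : ℕ => p.eval (k : ℤ)) = 0 := by
  intro n
  induction n with
  | zero => intro p hp; exact absurd hp (Nat.not_lt_zero _)
  | succ n ih =>
    intro p hp
    rw [Function.iterate_succ_apply]
    have hq : (fwdDiff (1:ℕ) fun k : ℕ => p.eval (k : ℤ))
        = fun k : ℕ => (p.comp (X + 1) - p).eval (k : ℤ) := by
      funext k
      simp only [fwdDiff, Polynomial.eval_sub, Polynomial.eval_comp, Polynomial.eval_add,
        Polynomial.eval_X, Polynomial.eval_one]
      push_cast
      ring
    rw [hq]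
    by_cases hc : p.comp (X + 1) - p = 0
    · rw [hc]
      have hz : (fun k : ℕ => (0 : Polynomial ℤ).eval (k : ℤ)) = (0 : ℕ → ℤ) := by
        funext k; simp
      rw [hz]
      exact myIterZero n
    · apply ih
      -- degree argument
      rcases Nat.eq_zero_or_pos p.natDegree with h0 | h0
      · exfalso
        obtain ⟨c, rfl⟩ : ∃ c, p = C c := ⟨p.coeff 0, Polynomial.eq_C_of_natDegree_eq_zero h0⟩
        simp at hc
      · have hp0 : p ≠ 0 := fun h => by simp [h] at h0
        have hXdeg : (X + 1 : Polynomial ℤ).natDegree = 1 := by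
          simpa using Polynomial.natDegree_X_add_C (1 : ℤ)
        have hXlc : (X + 1 : Polynomial ℤ).leadingCoeff = 1 := by
          simpa using Polynomial.leadingCoeff_X_add_C (1 : ℤ)
        have hlc : (p.comp (X + 1)).leadingCoeff = p.leadingCoeff := by
          rw [Polynomial.leadingCoeff_comp (by rw [hXdeg]; exact one_ne_zero), hXlc, one_pow, mul_one]
        have hcomp0 : p.comp (X + 1) ≠ 0 := by
          intro h
          apply hp0
          rw [← Polynomial.leadingCoeff_eq_zero, ← hlc, h, Polynomial.leadingCoeff_zero]
        have hnd : (p.comp (X + 1)).natDegree = p.natDegree := by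
          rw [Polynomial.natDegree_comp, hXdeg, mul_one]
        have hdeg : (p.comp (X + 1)).degree = p.degree := by
          rw [Polynomial.degree_eq_natDegree hcomp0, Polynomial.degree_eq_natDegree hp0, hnd]
        have hlt : (p.comp (X + 1) - p).degree < p.degree :=
          hdeg ▸ Polynomial.degree_sub_lt hdeg hcomp0 hlc
        have := Polynomial.natDegree_lt_natDegree hc hlt
        omega


end MyAux

/-- For integers `r ≥ 0` and `1 ≤ u ≤ 2r`,
`∑_{k=2u}^{2r+1} C(2r+1,k) (-1)^{k+1} k(k-2)⋯(k-2(u-1))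
 = -∑_{ℓ=0}^{u-1} C(2r+1,2ℓ+1) (2ℓ+1)‼ (2(u-1-ℓ)-1)‼ (-1)^{u-1-ℓ}`. -/
theorem alternating_sum_falling_double_factorial
    (r u : ℕ) (hu1 : 1 ≤ u) (hu2 : u ≤ 2 * r) :
    ∑ k ∈ Finset.Icc (2 * u) (2 * r + 1),
        ((2 * r + 1).choose k : ℤ) * (-1 : ℤ) ^ (k + 1) *
          ∏ i ∈ Finset.range u, ((k : ℤ) - 2 * i)
      = - ∑ ℓ ∈ Finset.range u,
          ((2 * r + 1).choose (2 * ℓ + 1) : ℤ) * (Nat.doubleFactorial (2 * ℓ + 1) : ℤ) *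
            (Nat.doubleFactorial (2 * (u - 1 - ℓ) - 1) : ℤ) * (-1 : ℤ) ^ (u - 1 - ℓ) := by
  set f : ℕ → ℤ := fun k =>
    ((2 * r + 1).choose k : ℤ) * (-1 : ℤ) ^ (k + 1) *
      ∏ i ∈ Finset.range u, ((k : ℤ) - 2 * i) with hf
  -- Step 1: full alternating sum vanishes
  have hzero : ∑ k ∈ Finset.range (2 * r + 2), f k = 0 := by
    set p : Polynomial ℤ := ∏ i ∈ Finset.range u, (Polynomial.X - Polynomial.C (2 * (i : ℤ)))
      with hp
    have hdeg : p.natDegree < 2 * r + 1 := by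
      have h1 : p.natDegree ≤ ∑ i ∈ Finset.range u,
          (Polynomial.X - Polynomial.C (2 * (i : ℤ))).natDegree :=
        Polynomial.natDegree_prod_le _ _
      have h2 : ∀ i : ℕ, (Polynomial.X - Polynomial.C (2 * (i : ℤ))).natDegree = 1 := fun i =>
        Polynomial.natDegree_X_sub_C _
      simp only [h2, Finset.sum_const, Finset.card_range, smul_eq_mul, mul_one] at h1
      omega
    have h1 := myFdZero (2 * r + 1) p hdeg
    have h2 := fwdDiff_iter_eq_sum_shift (1 : ℕ) (fun k : ℕ => p.eval (k : ℤ)) (2 * r + 1) 0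
    rw [h1] at h2
    simp only [Pi.zero_apply, smul_eq_mul, mul_one, zero_add] at h2
    have h3 : ∑ k ∈ Finset.range (2 * r + 1 + 1), f k
        = ∑ x ∈ Finset.range (2 * r + 1 + 1),
            (-1 : ℤ) ^ (2 * r + 1 - x) * ((2 * r + 1).choose x : ℤ) * Polynomial.eval (x : ℤ) p := by
      apply Finset.sum_congr rfl
      intro k hk
      have hk' : k ≤ 2 * r + 1 := by simpa [Nat.lt_succ_iff] using hk
      have heval : p.eval (k : ℤ) = ∏ i ∈ Finset.range u, ((k : ℤ) - 2 * i) := by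
        simp [hp, Polynomial.eval_prod]
      have hsgn : (-1 : ℤ) ^ (2 * r + 1 - k) = (-1 : ℤ) ^ (k + 1) := myNegOne (by omega)
      rw [hf, heval, hsgn]
      ring
    rw [show 2 * r + 2 = 2 * r + 1 + 1 by omega, h3, ← h2]
  -- Step 2: splitting off the initial segment
  have hext : ∀ k, 2 * r + 1 < k → f k = 0 := by
    intro k hk
    rw [hf]
    simp [Nat.choose_eq_zero_of_lt hk]
  have key : ∑ k ∈ Finset.range (2 * u), f k + ∑ k ∈ Finset.Icc (2 * u) (2 * r + 1), f k = 0 := by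
    rcases le_or_gt (2 * u) (2 * r + 2) with h | h
    · have hIcc : Finset.Icc (2 * u) (2 * r + 1) = Finset.Ico (2 * u) (2 * r + 2) := by
        ext x; simp; omega
      rw [hIcc, Finset.range_eq_Ico,
        Finset.sum_Ico_consecutive f (Nat.zero_le _) h, ← Finset.range_eq_Ico]
      exact hzero
    · have hIcc : Finset.Icc (2 * u) (2 * r + 1) = ∅ := Finset.Icc_eq_empty (by omega)
      rw [hIcc, Finset.sum_empty, add_zero, ← hzero]
      exact (Finset.sum_subset (Finset.range_subset_range.2 (by omega))
        (fun x hx hnx => hext x (by simp at hx hnx; omega))).symm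
  have hgoal1 : ∑ k ∈ Finset.Icc (2 * u) (2 * r + 1), f k
      = - ∑ k ∈ Finset.range (2 * u), f k := by linarith [key]
  rw [hgoal1, neg_inj, myPair u f]
  apply Finset.sum_congr rfl
  intro l hl
  have hl' : l < u := Finset.mem_range.1 hl
  have h20 : f (2 * l) = 0 := by
    rw [hf]
    exact mul_eq_zero_of_right _ (Finset.prod_eq_zero hl (by push_cast; ring))
  have h21 : f (2 * l + 1)
      = ((2 * r + 1).choose (2 * l + 1) : ℤ) * (Nat.doubleFactorial (2 * l + 1) : ℤ) *
          (Nat.doubleFactorial (2 * (u - 1 - l) - 1) : ℤ) * (-1 : ℤ) ^ (u - 1 - l) := by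
    rw [hf]
    have hsgn : (-1 : ℤ) ^ (2 * l + 1 + 1) = 1 := Even.neg_one_pow ⟨l + 1, by ring⟩
    have hpr : ∏ i ∈ Finset.range u, (((2 * l + 1 : ℕ) : ℤ) - 2 * i)
        = ∏ i ∈ Finset.range u, ((2 * (l : ℤ) + 1) - 2 * i) := by
      apply Finset.prod_congr rfl; intro i _; push_cast; ring
    simp only [hsgn, hpr, myProd u l hl']
    ring
  rw [h20, h21, zero_add]

end
end

section
/- For every t > 0, Σ_{i=3}^∞ (i−2) ∫_0^∞ exp(−t²w/4) · w^{i−3} · (1+w)^{−(i−3/2)} dw ≤ 4/t² + 16/t⁴. -/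
open MeasureTheory Filter Real
open scoped ENNReal

noncomputable section

lemma pointwise_sum_le (t : ℝ) {w : ℝ} (hw : 0 < w) :
    ∑' n : ℕ, ((n : ℝ≥0∞) + 1) * ENNReal.ofReal
      (Real.exp (-t ^ 2 * w / 4) * w ^ n * (1 + w) ^ (-((n : ℝ) + 3 / 2)))
    ≤ ENNReal.ofReal (Real.exp (-t ^ 2 * w / 4) * (1 + w)) := by
  have hw1 : (0:ℝ) < 1 + w := by linarith
  set a := Real.exp (-t ^ 2 * w / 4) with ha
  have ha0 : 0 ≤ a := Real.exp_nonneg _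
  set x := w / (1 + w) with hx
  have hx0 : 0 ≤ x := by positivity
  have hx1 : x < 1 := (div_lt_one hw1).2 (by linarith)
  have h1x : 1 - x = 1 / (1 + w) := by rw [hx]; field_simp; ring
  set c : ℝ := (1 + w) ^ (-(3/2 : ℝ)) with hc
  have hc0 : 0 ≤ c := Real.rpow_nonneg hw1.le _
  have hterm : ∀ n : ℕ, a * w ^ n * (1 + w) ^ (-((n : ℝ) + 3 / 2))
      = (a * c) * x ^ n := by
    intro n
    have h1 : (1 + w) ^ (-((n : ℝ) + 3 / 2))
        = ((1 + w) ^ n)⁻¹ * c := by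
      rw [show -((n : ℝ) + 3 / 2) = -(n:ℝ) + (-(3/2 : ℝ)) by ring,
        Real.rpow_add hw1, Real.rpow_neg hw1.le, Real.rpow_natCast]
    rw [h1, hx, div_pow]
    field_simp
  -- the real sum
  have hns : HasSum (fun n : ℕ => (n : ℝ) * x ^ n) (x / (1 - x) ^ 2) :=
    hasSum_coe_mul_geometric_of_norm_lt_one
      (by rw [Real.norm_eq_abs, abs_of_nonneg hx0]; exact hx1)
  have hgs : HasSum (fun n : ℕ => x ^ n) ((1 - x)⁻¹) :=
    hasSum_geometric_of_lt_one hx0 hx1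
  have h1xpos : (0:ℝ) < 1 - x := by linarith
  have hsum : HasSum (fun n : ℕ => ((n : ℝ) + 1) * x ^ n) ((1 + w) ^ 2) := by
    have h := hns.add hgs
    have heq : x / (1 - x) ^ 2 + (1 - x)⁻¹ = (1 + w) ^ 2 := by
      rw [hx, h1x]
      field_simp
      ring
    rw [heq] at h
    convert h using 2 with n
    ring
  have hsum2 : HasSum (fun n : ℕ => ((n : ℝ) + 1) * ((a * c) * x ^ n))
      ((a * c) * (1 + w) ^ 2) := by
    have h := hsum.mul_left (a * c)
    have e : (fun n : ℕ => ((n : ℝ) + 1) * ((a * c) * x ^ n))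
        = fun i : ℕ => a * c * (((i : ℝ) + 1) * x ^ i) := funext fun n => by ring
    rw [e]
    exact h
  have hnn : ∀ n : ℕ, 0 ≤ ((n : ℝ) + 1) * ((a * c) * x ^ n) := by
    intro n; positivity
  calc ∑' n : ℕ, ((n : ℝ≥0∞) + 1) * ENNReal.ofReal (a * w ^ n * (1 + w) ^ (-((n : ℝ) + 3 / 2)))
      = ∑' n : ℕ, ENNReal.ofReal (((n : ℝ) + 1) * ((a * c) * x ^ n)) := by
        congr 1; ext n
        have h1 : ((n : ℝ≥0∞) + 1) = ENNReal.ofReal ((n:ℝ)+1) := by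
          rw [ENNReal.ofReal_add (by positivity) zero_le_one, ENNReal.ofReal_natCast,
            ENNReal.ofReal_one]
        rw [hterm n, h1, ← ENNReal.ofReal_mul (by positivity)]
    _ = ENNReal.ofReal ((a * c) * (1 + w) ^ 2) := by
        rw [← ENNReal.ofReal_tsum_of_nonneg hnn hsum2.summable, hsum2.tsum_eq]
    _ ≤ ENNReal.ofReal (a * (1 + w)) := by
        apply ENNReal.ofReal_le_ofReal
        have hcw : c * (1 + w) ^ 2 = (1 + w) ^ (1/2 : ℝ) := by
          rw [hc, show ((1+w):ℝ) ^ (2:ℕ) = (1+w) ^ ((2:ℕ):ℝ) from (Real.rpow_natCast _ 2).symm,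
            ← Real.rpow_add hw1]
          norm_num
        have hle : (1 + w) ^ (1/2 : ℝ) ≤ 1 + w := by
          calc (1 + w) ^ (1/2 : ℝ) ≤ (1 + w) ^ (1 : ℝ) :=
            Real.rpow_le_rpow_of_exponent_le (by linarith) (by norm_num)
          _ = 1 + w := Real.rpow_one _
        calc a * c * (1 + w) ^ 2 = a * (c * (1 + w) ^ 2) := by ring
          _ = a * ((1 + w) ^ (1/2 : ℝ)) := by rw [hcw]
          _ ≤ a * (1 + w) := mul_le_mul_of_nonneg_left hle ha0

/-- For every `t > 0`, `∑_{i=3}^∞ (i-2) ∫_0^∞ e^{-t²w/4} w^{i-3} (1+w)^{-(i-3/2)} dw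
 ≤ 4/t² + 16/t⁴` (the sum is indexed by `i = n + 3`, `n : ℕ`). -/
theorem sum_kummer_integrals_le (t : ℝ) (ht : 0 < t) :
    ∑' n : ℕ, ((n : ℝ≥0∞) + 1) *
        ∫⁻ w in Set.Ioi (0 : ℝ),
          ENNReal.ofReal
            (Real.exp (-t ^ 2 * w / 4) * w ^ n * (1 + w) ^ (-((n : ℝ) + 3 / 2)))
      ≤ ENNReal.ofReal (4 / t ^ 2 + 16 / t ^ 4) := by
  set b : ℝ := t ^ 2 / 4 with hb
  have hb0 : 0 < b := by positivity
  have hmeas : ∀ n : ℕ, Measurable fun w : ℝ =>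
      ENNReal.ofReal (Real.exp (-t ^ 2 * w / 4) * w ^ n * (1 + w) ^ (-((n : ℝ) + 3 / 2))) := by
    intro n
    apply Measurable.ennreal_ofReal
    fun_prop
  have hexparg : ∀ w : ℝ, -t ^ 2 * w / 4 = -(b * w) := fun w => by rw [hb]; ring
  -- integrability of the majorant pieces
  have hint1 : IntegrableOn (fun w : ℝ => Real.exp (-(b * w))) (Set.Ioi 0) := by
    have h := exp_neg_integrableOn_Ioi 0 hb0
    exact h.congr_fun (fun w _ => by simp only [neg_mul]) measurableSet_Ioi
  have hint2 : IntegrableOn (fun w : ℝ => w * Real.exp (-(b * w))) (Set.Ioi 0) := by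
    have h := integrableOn_rpow_mul_exp_neg_mul_rpow (p := 1) (s := 1) (b := b)
      (by norm_num) one_pos hb0
    refine h.congr_fun (fun w hw => ?_) measurableSet_Ioi
    simp only [Real.rpow_one, neg_mul]
  have hintsum : IntegrableOn (fun w : ℝ => Real.exp (-(b * w)) * (1 + w)) (Set.Ioi 0) := by
    have h : IntegrableOn (fun w : ℝ => Real.exp (-(b * w)) + w * Real.exp (-(b * w)))
        (Set.Ioi 0) := hint1.add hint2
    exact h.congr_fun (fun w _ => by ring) measurableSet_Ioi
  -- value of the integral of the majorant
  have hI1 : ∫ w in Set.Ioi (0:ℝ), Real.exp (-(b * w)) = 1 / b := by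
    have h := Real.integral_rpow_mul_exp_neg_mul_Ioi (a := 1) one_pos hb0
    simpa using h
  have hI2 : ∫ w in Set.Ioi (0:ℝ), w * Real.exp (-(b * w)) = 1 / b ^ 2 := by
    have h := Real.integral_rpow_mul_exp_neg_mul_Ioi (a := 2) two_pos hb0
    simp only [show (2:ℝ) - 1 = 1 by norm_num, Real.rpow_one, Real.Gamma_two, mul_one] at h
    rw [h, show ((1:ℝ)/b) ^ (2:ℝ) = 1 / b ^ 2 by
      rw [show (2:ℝ) = ((2:ℕ):ℝ) by norm_num, Real.rpow_natCast, div_pow, one_pow]]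
  have hIval : ∫ w in Set.Ioi (0:ℝ), Real.exp (-(b * w)) * (1 + w) = 1 / b + 1 / b ^ 2 := by
    have h : ∫ w in Set.Ioi (0:ℝ), Real.exp (-(b * w)) * (1 + w)
        = ∫ w in Set.Ioi (0:ℝ), (Real.exp (-(b * w)) + w * Real.exp (-(b * w))) := by
      apply setIntegral_congr_fun measurableSet_Ioi
      intro w _; ring
    rw [h, integral_add hint1 hint2, hI1, hI2]
  calc ∑' n : ℕ, ((n : ℝ≥0∞) + 1) *
        ∫⁻ w in Set.Ioi (0 : ℝ), ENNReal.ofReal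
          (Real.exp (-t ^ 2 * w / 4) * w ^ n * (1 + w) ^ (-((n : ℝ) + 3 / 2)))
      = ∑' n : ℕ, ∫⁻ w in Set.Ioi (0 : ℝ), ((n : ℝ≥0∞) + 1) * ENNReal.ofReal
          (Real.exp (-t ^ 2 * w / 4) * w ^ n * (1 + w) ^ (-((n : ℝ) + 3 / 2))) :=
        tsum_congr fun n => (lintegral_const_mul _ (hmeas n)).symm
    _ = ∫⁻ w in Set.Ioi (0 : ℝ), ∑' n : ℕ, ((n : ℝ≥0∞) + 1) * ENNReal.ofReal
          (Real.exp (-t ^ 2 * w / 4) * w ^ n * (1 + w) ^ (-((n : ℝ) + 3 / 2))) :=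
        (lintegral_tsum fun n => ((hmeas n).const_mul _).aemeasurable).symm
    _ ≤ ∫⁻ w in Set.Ioi (0 : ℝ), ENNReal.ofReal (Real.exp (-t ^ 2 * w / 4) * (1 + w)) := by
        refine setLIntegral_mono ?_ (fun w hw => pointwise_sum_le t hw)
        apply Measurable.ennreal_ofReal
        fun_prop
    _ = ENNReal.ofReal (1 / b + 1 / b ^ 2) := by
        rw [show (fun w : ℝ => ENNReal.ofReal (Real.exp (-t ^ 2 * w / 4) * (1 + w)))
            = fun w : ℝ => ENNReal.ofReal (Real.exp (-(b * w)) * (1 + w)) by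
          funext w; rw [hexparg w]]
        rw [← ofReal_integral_eq_lintegral_ofReal hintsum
          (ae_restrict_of_forall_mem measurableSet_Ioi fun w hw =>
            mul_nonneg (Real.exp_nonneg _) (by simp only [Set.mem_Ioi] at hw; linarith)), hIval]
    _ = ENNReal.ofReal (4 / t ^ 2 + 16 / t ^ 4) := by
        congr 1
        rw [hb]
        field_simp
        ring

end
end

section
/- For every integer L ≥ 4 and every t > 0, Σ_{i=L}^∞ (i−2) ∫_0^∞ exp(−t²w/4) · w^{i−3} · (1+w)^{−(i−3/2)} dw ≤ 4^{L−2} (L−2)! / t^{2L−4}. -/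
set_option maxHeartbeats 1000000

open MeasureTheory Filter Real Set
open scoped ENNReal

noncomputable section

lemma key_lintegral (k : ℕ) {z : ℝ} (hz : 0 < z) :
    ∫⁻ w in Set.Ioi (0 : ℝ), ENNReal.ofReal (Real.exp (-(z * w)) * w ^ k)
      = ENNReal.ofReal ((Nat.factorial k : ℝ) / z ^ (k + 1)) := by
  have hint : IntegrableOn (fun w : ℝ => Real.exp (-(z * w)) * w ^ k) (Ioi 0) := by
    have := integrableOn_rpow_mul_exp_neg_mul_rpow (p := 1) (s := k) (b := z)
      (lt_of_lt_of_le neg_one_lt_zero (Nat.cast_nonneg k)) zero_lt_one hz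
    refine this.congr_fun (fun x hx => ?_) measurableSet_Ioi
    dsimp only
    rw [Real.rpow_one, Real.rpow_natCast, mul_comm, neg_mul]
  have hnn : (0 : ℝ → ℝ) ≤ᵐ[volume.restrict (Ioi 0)]
      fun w => Real.exp (-(z * w)) * w ^ k :=
    (ae_restrict_iff' measurableSet_Ioi).2 (ae_of_all _ fun x hx => by
      have : (0:ℝ) < x := hx
      positivity)
  rw [← ofReal_integral_eq_lintegral_ofReal hint hnn]
  congr 1
  have := integral_rpow_mul_exp_neg_mul_Ioi (a := (k + 1 : ℝ)) (r := z)
    (by positivity) hz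
  have heq : ∫ w in Ioi (0:ℝ), Real.exp (-(z * w)) * w ^ k
      = ∫ w in Ioi (0:ℝ), w ^ ((k + 1 : ℝ) - 1) * Real.exp (-(z * w)) := by
    refine setIntegral_congr_fun measurableSet_Ioi (fun x hx => ?_)
    rw [add_sub_cancel_right, Real.rpow_natCast, mul_comm]
  rw [heq, this, Real.Gamma_nat_eq_factorial,
    show ((k:ℝ)+1) = ((k+1:ℕ):ℝ) by push_cast; ring, Real.rpow_natCast]
  rw [one_div, inv_pow]
  field_simp

lemma pointwise_bound (L : ℕ) (hL : 4 ≤ L) (t : ℝ) {w : ℝ} (hw : 0 < w) :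
    ∑' n : ℕ, ((L + n - 2 : ℕ) : ℝ≥0∞) *
        ENNReal.ofReal
          (Real.exp (-t ^ 2 * w / 4) * w ^ (L + n - 3) *
            (1 + w) ^ (-((L : ℝ) + n - 3 / 2)))
      ≤ ENNReal.ofReal
          (((L - 2 : ℕ) : ℝ) * (Real.exp (-t ^ 2 * w / 4) * w ^ (L - 3))) := by
  have hL4 : (4:ℝ) ≤ (L:ℝ) := by exact_mod_cast hL
  have h1w : (0:ℝ) < 1 + w := by linarith
  set r := w / (1 + w) with hrdef
  have hr0 : 0 ≤ r := by positivity
  have hr1 : r < 1 := by rw [hrdef, div_lt_one h1w]; linarith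
  set A := Real.exp (-t^2*w/4) with hAdef
  have hA : 0 ≤ A := Real.exp_nonneg _
  set C := ((L-2:ℕ):ℝ) * A * w^(L-3) * (1+w)^(-((L:ℝ)-3/2)) with hC
  have h1 : Summable (fun n : ℕ => (n:ℝ) * r^n) := by
    simpa using summable_pow_mul_geometric_of_norm_lt_one 1
      (by rwa [Real.norm_eq_abs, abs_of_nonneg hr0])
  have h2 : Summable (fun n : ℕ => r^n) := summable_geometric_of_lt_one hr0 hr1
  have hsum : Summable (fun n : ℕ => C * (((n:ℝ)+1) * r^n)) := by
    apply Summable.mul_left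
    exact (h1.add h2).congr (fun n => by ring)
  have hterm : ∀ n : ℕ, ((L + n - 2 : ℕ) : ℝ≥0∞) *
      ENNReal.ofReal
        (Real.exp (-t ^ 2 * w / 4) * w ^ (L + n - 3) *
          (1 + w) ^ (-((L : ℝ) + n - 3 / 2)))
      ≤ ENNReal.ofReal (C * (((n:ℝ)+1) * r^n)) := by
    intro n
    rw [← ENNReal.ofReal_natCast, ← ENNReal.ofReal_mul (Nat.cast_nonneg _)]
    apply ENNReal.ofReal_le_ofReal
    have hP : (0:ℝ) ≤ A * w^(L-3) * (1+w)^(-((L:ℝ)-3/2)) * (w^n * (1+w)^(-(n:ℝ))) := by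
      positivity
    have hsplitw : w ^ (L + n - 3) = w^(L-3) * w^n := by
      rw [← pow_add]; congr 1; omega
    have hsplit1w : (1+w) ^ (-((L:ℝ)+n-3/2))
        = (1+w)^(-((L:ℝ)-3/2)) * (1+w)^(-(n:ℝ)) := by
      rw [← Real.rpow_add h1w]; congr 1; ring
    have hrn : r ^ n = w^n * (1+w)^(-(n:ℝ)) := by
      rw [Real.rpow_neg h1w.le, Real.rpow_natCast, hrdef, div_pow, div_eq_mul_inv]
    have hcoef : ((L + n - 2 : ℕ) : ℝ) ≤ ((L-2:ℕ):ℝ) * ((n:ℝ)+1) := by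
      rw [Nat.cast_sub (by omega), Nat.cast_sub (by omega)]
      push_cast
      nlinarith [Nat.cast_nonneg (α := ℝ) n]
    calc ((L + n - 2 : ℕ) : ℝ) *
          (A * w ^ (L + n - 3) * (1 + w) ^ (-((L : ℝ) + n - 3 / 2)))
        = ((L + n - 2 : ℕ) : ℝ) *
          (A * w^(L-3) * (1+w)^(-((L:ℝ)-3/2)) * (w^n * (1+w)^(-(n:ℝ)))) := by
          rw [hsplitw, hsplit1w]; ring
      _ ≤ (((L-2:ℕ):ℝ) * ((n:ℝ)+1)) *
          (A * w^(L-3) * (1+w)^(-((L:ℝ)-3/2)) * (w^n * (1+w)^(-(n:ℝ)))) :=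
          mul_le_mul_of_nonneg_right hcoef hP
      _ = C * (((n:ℝ)+1)*r^n) := by rw [hrn, hC]; ring
  refine le_trans (ENNReal.tsum_le_tsum hterm) ?_
  rw [← ENNReal.ofReal_tsum_of_nonneg (fun n => by positivity) hsum]
  apply ENNReal.ofReal_le_ofReal
  have htsum : ∑' n:ℕ, C * (((n:ℝ)+1)*r^n) = C * (1+w)^2 := by
    rw [tsum_mul_left]
    congr 1
    have e1 : (fun n : ℕ => ((n:ℝ)+1)*r^n) = fun n : ℕ => (n:ℝ)*r^n + r^n := by
      funext n; ring
    rw [e1, Summable.tsum_add h1 h2,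
      tsum_coe_mul_geometric_of_norm_lt_one
        (by rwa [Real.norm_eq_abs, abs_of_nonneg hr0]),
      tsum_geometric_of_lt_one hr0 hr1]
    have h1r : 1 - r = 1/(1+w) := by
      rw [hrdef]; field_simp; ring
    have hne : 1 - r ≠ 0 := by linarith
    have : r/(1-r)^2 + (1-r)⁻¹ = ((1-r)^2)⁻¹ := by
      field_simp
      ring
    rw [this, h1r, one_div, ← inv_pow, inv_inv]
  rw [htsum, hC]
  have hone : (1+w)^(-((L:ℝ)-3/2)) * (1+w)^2 ≤ 1 := by
    rw [← Real.rpow_natCast (1+w) 2, ← Real.rpow_add h1w]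
    apply Real.rpow_le_one_of_one_le_of_nonpos (by linarith)
    push_cast; linarith
  have hK : (0:ℝ) ≤ ((L-2:ℕ):ℝ) * A * w^(L-3) := by positivity
  calc ((L-2:ℕ):ℝ) * A * w^(L-3) * (1+w)^(-((L:ℝ)-3/2)) * (1+w)^2
      = (((L-2:ℕ):ℝ) * A * w^(L-3)) * ((1+w)^(-((L:ℝ)-3/2)) * (1+w)^2) := by ring
    _ ≤ (((L-2:ℕ):ℝ) * A * w^(L-3)) * 1 := mul_le_mul_of_nonneg_left hone hK
    _ = ((L-2:ℕ):ℝ) * (A * w^(L-3)) := by ring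

/-- For every integer `L ≥ 4` and `t > 0`,
`∑_{i=L}^∞ (i-2) ∫_0^∞ e^{-t²w/4} w^{i-3} (1+w)^{-(i-3/2)} dw ≤ 4^{L-2} (L-2)! / t^{2L-4}`
(the sum is indexed by `i = L + n`, `n : ℕ`). -/
theorem sum_kummer_integrals_tail_le (L : ℕ) (hL : 4 ≤ L) (t : ℝ) (ht : 0 < t) :
    ∑' n : ℕ, ((L + n - 2 : ℕ) : ℝ≥0∞) *
        ∫⁻ w in Set.Ioi (0 : ℝ),
          ENNReal.ofReal
            (Real.exp (-t ^ 2 * w / 4) * w ^ (L + n - 3) *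
              (1 + w) ^ (-((L : ℝ) + n - 3 / 2)))
      ≤ ENNReal.ofReal
          ((4 : ℝ) ^ (L - 2) * (Nat.factorial (L - 2) : ℝ) / t ^ (2 * L - 4)) := by
  have hz : (0:ℝ) < t^2/4 := by positivity
  have measF : ∀ n : ℕ, Measurable (fun w : ℝ =>
      ENNReal.ofReal (Real.exp (-t ^ 2 * w / 4) * w ^ (L + n - 3) *
        (1 + w) ^ (-((L : ℝ) + n - 3 / 2)))) := by
    intro n
    apply Measurable.ennreal_ofReal
    fun_prop
  calc ∑' n : ℕ, ((L + n - 2 : ℕ) : ℝ≥0∞) *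
        ∫⁻ w in Set.Ioi (0 : ℝ),
          ENNReal.ofReal
            (Real.exp (-t ^ 2 * w / 4) * w ^ (L + n - 3) *
              (1 + w) ^ (-((L : ℝ) + n - 3 / 2)))
      = ∑' n : ℕ, ∫⁻ w in Set.Ioi (0 : ℝ), ((L + n - 2 : ℕ) : ℝ≥0∞) *
          ENNReal.ofReal
            (Real.exp (-t ^ 2 * w / 4) * w ^ (L + n - 3) *
              (1 + w) ^ (-((L : ℝ) + n - 3 / 2))) := by
        refine tsum_congr fun n => ?_
        rw [lintegral_const_mul' _ _ (ENNReal.natCast_ne_top _)]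
    _ = ∫⁻ w in Set.Ioi (0 : ℝ), ∑' n : ℕ, ((L + n - 2 : ℕ) : ℝ≥0∞) *
          ENNReal.ofReal
            (Real.exp (-t ^ 2 * w / 4) * w ^ (L + n - 3) *
              (1 + w) ^ (-((L : ℝ) + n - 3 / 2))) :=
        (lintegral_tsum fun n => (measurable_const.mul (measF n)).aemeasurable).symm
    _ ≤ ∫⁻ w in Set.Ioi (0 : ℝ),
          ENNReal.ofReal
            (((L - 2 : ℕ) : ℝ) * (Real.exp (-t ^ 2 * w / 4) * w ^ (L - 3))) := by
        apply lintegral_mono_ae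
        rw [ae_restrict_iff' measurableSet_Ioi]
        exact ae_of_all _ fun w hw => pointwise_bound L hL t hw
    _ = ENNReal.ofReal (((L - 2 : ℕ) : ℝ)) *
          ∫⁻ w in Set.Ioi (0 : ℝ),
            ENNReal.ofReal (Real.exp (-(t^2/4 * w)) * w ^ (L - 3)) := by
        rw [← lintegral_const_mul' _ _ ENNReal.ofReal_ne_top]
        refine setLIntegral_congr_fun measurableSet_Ioi (fun w hw => ?_)
        rw [← ENNReal.ofReal_mul (Nat.cast_nonneg _)]
        congr 2
        ring_nf
    _ = ENNReal.ofReal (((L - 2 : ℕ) : ℝ)) *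
          ENNReal.ofReal ((Nat.factorial (L-3) : ℝ) / (t^2/4) ^ (L - 3 + 1)) := by
        rw [key_lintegral (L-3) hz]
    _ = ENNReal.ofReal
          ((4 : ℝ) ^ (L - 2) * (Nat.factorial (L - 2) : ℝ) / t ^ (2 * L - 4)) := by
        rw [← ENNReal.ofReal_mul (Nat.cast_nonneg _)]
        congr 1
        have h32 : L - 3 + 1 = L - 2 := by omega
        have hfac : (Nat.factorial (L-2) : ℝ) = ((L-2:ℕ):ℝ) * (Nat.factorial (L-3) : ℝ) := by
          rw [show L - 2 = (L-3) + 1 by omega, Nat.factorial_succ]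
          push_cast [h32]
          ring
        have hpow : (t^2/4) ^ (L-2) = t ^ (2*L-4) / 4 ^ (L-2) := by
          rw [div_pow, ← pow_mul]
          congr 2
          omega
        rw [h32, hfac, hpow]
        have ht4 : (0:ℝ) < t ^ (2*L-4) := by positivity
        field_simp


end
end

section
/- For every integer k ≥ 2, 0 ≤ Γ(k)/Γ(k − 1/2) − √(k−1) ≤ 1/(6√(k−1)). -/
open MeasureTheory Filter Real
open scoped ENNReal

noncomputable section

/-- Log-convexity of Gamma at midpoints. -/
lemma gamma_midpoint_sq_le {a b : ℝ} (ha : 0 < a) (hb : 0 < b) :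
    Real.Gamma ((a + b) / 2) ^ 2 ≤ Real.Gamma a * Real.Gamma b := by
  have h := Real.convexOn_log_Gamma.2 (Set.mem_Ioi.mpr ha) (Set.mem_Ioi.mpr hb)
    (by norm_num : (0:ℝ) ≤ 1/2) (by norm_num : (0:ℝ) ≤ 1/2) (by norm_num)
  simp only [Function.comp_apply, smul_eq_mul] at h
  have hm : 0 < (a + b) / 2 := by linarith
  have h2 : 2 * Real.log (Real.Gamma ((a+b)/2)) ≤ Real.log (Real.Gamma a) + Real.log (Real.Gamma b) := by
    have : (1/2 : ℝ) * a + (1/2 : ℝ) * b = (a+b)/2 := by ring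
    rw [this] at h; linarith
  have hga := Real.Gamma_pos_of_pos ha
  have hgb := Real.Gamma_pos_of_pos hb
  have hgm := Real.Gamma_pos_of_pos hm
  calc Real.Gamma ((a+b)/2) ^ 2
      = Real.exp (2 * Real.log (Real.Gamma ((a+b)/2))) := by
        rw [two_mul, Real.exp_add, Real.exp_log hgm, sq]
    _ ≤ Real.exp (Real.log (Real.Gamma a) + Real.log (Real.Gamma b)) := Real.exp_le_exp.mpr h2
    _ = Real.Gamma a * Real.Gamma b := by rw [Real.exp_add, Real.exp_log hga, Real.exp_log hgb]

/-- The squared ratio. -/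
def q (x : ℝ) : ℝ := (Real.Gamma (x + 1) / Real.Gamma (x + 1/2)) ^ 2

lemma q_upper {x : ℝ} (hx : 0 < x) : q x ≤ x + 1/2 := by
  have h1 : 0 < x + 1/2 := by linarith
  have h2 : 0 < x + 1 := by linarith
  have hg1 := Real.Gamma_pos_of_pos h1
  have key : Real.Gamma (x+1) ^ 2 ≤ Real.Gamma (x + 1/2) * Real.Gamma (x + 3/2) := by
    have := gamma_midpoint_sq_le h1 (by linarith : (0:ℝ) < x + 3/2)
    have e : ((x + 1/2) + (x + 3/2)) / 2 = x + 1 := by ring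
    rwa [e] at this
  have hrec : Real.Gamma (x + 3/2) = (x + 1/2) * Real.Gamma (x + 1/2) := by
    have := Real.Gamma_add_one (s := x + 1/2) (by positivity)
    rw [show x + 1/2 + 1 = x + 3/2 by ring] at this
    exact this
  rw [q, div_pow]
  rw [div_le_iff₀ (by positivity)]
  calc Real.Gamma (x+1) ^ 2 ≤ Real.Gamma (x + 1/2) * ((x + 1/2) * Real.Gamma (x + 1/2)) := by
        rw [← hrec]; exact key
    _ = (x + 1/2) * Real.Gamma (x + 1/2) ^ 2 := by ring

lemma q_lower {x : ℝ} (hx : 1/2 < x) : x ≤ q x := by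
  have hx0 : 0 < x := by linarith
  have h2 : 0 < x + 1 := by linarith
  have hg := Real.Gamma_pos_of_pos hx0
  have hg1 := Real.Gamma_pos_of_pos h2
  have hgh := Real.Gamma_pos_of_pos (by linarith : (0:ℝ) < x + 1/2)
  have key : Real.Gamma (x + 1/2) ^ 2 ≤ Real.Gamma x * Real.Gamma (x + 1) := by
    have := gamma_midpoint_sq_le hx0 h2
    have e : (x + (x + 1)) / 2 = x + 1/2 := by ring
    rwa [e] at this
  have hrec : Real.Gamma (x + 1) = x * Real.Gamma x := Real.Gamma_add_one (ne_of_gt hx0)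
  rw [q, div_pow, le_div_iff₀ (by positivity)]
  calc x * Real.Gamma (x + 1/2) ^ 2 ≤ x * (Real.Gamma x * Real.Gamma (x+1)) := by
        exact mul_le_mul_of_nonneg_left key (le_of_lt hx0)
    _ = Real.Gamma (x+1) ^ 2 := by rw [hrec]; ring

lemma q_rec {x : ℝ} (hx : 0 < x) : q (x + 1) = ((x+1)/(x+1/2))^2 * q x := by
  have h1 : Real.Gamma (x + 1 + 1) = (x+1) * Real.Gamma (x+1) :=
    Real.Gamma_add_one (by positivity)
  have h2 : Real.Gamma (x + 1 + 1/2) = (x+1/2) * Real.Gamma (x+1/2) := by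
    have := Real.Gamma_add_one (s := x + 1/2) (by positivity)
    rw [show x + 1/2 + 1 = x + 1 + 1/2 by ring] at this
    exact this
  have hgh := Real.Gamma_pos_of_pos (by linarith : (0:ℝ) < x + 1/2)
  rw [q, q, h1, h2]
  field_simp



lemma q_step {y c : ℝ} (hy : 1/2 ≤ y) (hc : 0 ≤ c) (h : y + 1/3 + c ≤ q y) :
    (y + 1) + 1/3 + c + 1/(48*y) ≤ q (y + 1) := by
  have hy0 : 0 < y := by linarith
  rw [q_rec hy0]
  calc (y+1) + 1/3 + c + 1/(48*y) ≤ ((y+1)/(y+1/2))^2 * (y+1/3+c) := by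
        rw [div_pow, ← sub_nonneg]
        have e : (y+1)^2/(y+1/2)^2 * (y+1/3+c) - ((y+1)+1/3+c+1/(48*y))
            = (4*y^2 - (y+1/2)^2 + 48*c*y*(y+3/4)) / (48*y*(y+1/2)^2) := by
          field_simp
          ring
        rw [e]
        apply div_nonneg _ (by positivity)
        nlinarith [sq_nonneg (y - 1/2)]
    _ ≤ ((y+1)/(y+1/2))^2 * q y := by
        exact mul_le_mul_of_nonneg_left h (by positivity)

lemma q_grow {x c : ℝ} (hx : 1 ≤ x) (hc : 0 ≤ c) (h : x + 1/3 + c ≤ q x) :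
    ∀ m : ℕ, (x + m) + 1/3 + c + (∑ j ∈ Finset.range m, 1/(48*(x + j))) ≤ q (x + m) := by
  intro m
  induction m with
  | zero => simpa using h
  | succ m ih =>
    have hsum : 0 ≤ ∑ j ∈ Finset.range m, 1/(48*(x + j)) := by
      apply Finset.sum_nonneg
      intro j _
      have : (0:ℝ) < x + j := by positivity
      positivity
    have hstep := q_step (y := x + m) (c := c + ∑ j ∈ Finset.range m, 1/(48*(x + j)))
      (by have : (0:ℝ) ≤ m := Nat.cast_nonneg m; linarith)
      (by linarith)
      (by linarith [ih])
    rw [Finset.sum_range_succ]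
    push_cast
    push_cast at hstep
    rw [show x + ((m:ℝ) + 1) = x + (m:ℝ) + 1 by ring]
    linarith [hstep]

lemma q_le {x : ℝ} (hx : 1 ≤ x) : q x ≤ x + 1/3 := by
  by_contra hcon
  push_neg at hcon
  set c : ℝ := q x - (x + 1/3) with hc_def
  have hc : 0 < c := by simp [hc_def]; linarith
  have h : x + 1/3 + c ≤ q x := by simp [hc_def]
  have hx0 : 0 < x := by linarith
  -- partial harmonic sums exceed 8x at some point
  obtain ⟨m, hm⟩ := (Real.tendsto_sum_range_one_div_nat_succ_atTop.eventually_ge_atTop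
    (8*x)).exists
  have hgrow := q_grow hx (le_of_lt hc) h m
  have hup := q_upper (x := x + m) (by positivity)
  have hsum_le : (∑ j ∈ Finset.range m, (1 / (j + 1) : ℝ)) / (48*x)
      ≤ ∑ j ∈ Finset.range m, 1/(48*(x + j)) := by
    rw [Finset.sum_div]
    apply Finset.sum_le_sum
    intro j _
    rw [div_div]
    apply one_div_le_one_div_of_le (by positivity)
    have hj : (0:ℝ) ≤ j := Nat.cast_nonneg j
    nlinarith
  have h1 : (∑ j ∈ Finset.range m, (1 / (j + 1) : ℝ)) / (48*x) ≤ 1/6 - c := by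
    linarith
  have h2 : (8*x) / (48*x) ≤ (∑ j ∈ Finset.range m, (1 / (j + 1) : ℝ)) / (48*x) :=
    div_le_div_of_nonneg_right hm (by positivity)
  rw [show (8*x)/(48*x) = 1/6 by field_simp; ring] at h2
  linarith

lemma q_ge {x : ℝ} (hx : 1 ≤ x) : x ≤ q x := q_lower (by linarith)

/-- For every integer `k ≥ 2`, `0 ≤ Γ(k)/Γ(k-1/2) - √(k-1) ≤ 1/(6√(k-1))`. -/
theorem gamma_ratio_sub_sqrt_bounds (k : ℕ) (hk : 2 ≤ k) :
    0 ≤ Real.Gamma (k : ℝ) / Real.Gamma ((k : ℝ) - 1 / 2) - Real.sqrt ((k : ℝ) - 1) ∧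
      Real.Gamma (k : ℝ) / Real.Gamma ((k : ℝ) - 1 / 2) - Real.sqrt ((k : ℝ) - 1) ≤
        1 / (6 * Real.sqrt ((k : ℝ) - 1)) := by
  set x : ℝ := (k : ℝ) - 1 with hx_def
  have hx : 1 ≤ x := by
    have : (2:ℝ) ≤ (k:ℝ) := by exact_mod_cast hk
    simp [hx_def]; linarith
  have hx0 : 0 < x := by linarith
  have e1 : (k : ℝ) = x + 1 := by ring
  have e2 : (k : ℝ) - 1/2 = x + 1/2 := by ring
  set r : ℝ := Real.Gamma (k : ℝ) / Real.Gamma ((k : ℝ) - 1 / 2) with hr_def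
  have hr_eq : r = Real.Gamma (x + 1) / Real.Gamma (x + 1/2) := by rw [hr_def, e2, e1]
  have hr_pos : 0 < r := by
    rw [hr_eq]
    exact div_pos (Real.Gamma_pos_of_pos (by linarith)) (Real.Gamma_pos_of_pos (by linarith))
  have hq : r ^ 2 = q x := by rw [hr_eq, q]
  have hlow : x ≤ r ^ 2 := hq ▸ q_ge hx
  have hupp : r ^ 2 ≤ x + 1/3 := hq ▸ q_le hx
  have hs_pos : 0 < Real.sqrt x := Real.sqrt_pos.mpr hx0
  have hsq : Real.sqrt x * Real.sqrt x = x := Real.mul_self_sqrt (le_of_lt hx0)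
  constructor
  · rw [sub_nonneg]
    have : Real.sqrt x ≤ Real.sqrt (r ^ 2) := Real.sqrt_le_sqrt hlow
    rwa [Real.sqrt_sq (le_of_lt hr_pos)] at this
  · rw [sub_le_iff_le_add]
    have hbound : r ^ 2 ≤ (1 / (6 * Real.sqrt x) + Real.sqrt x) ^ 2 := by
      have hinv : (1 / (6 * Real.sqrt x)) * (6 * Real.sqrt x) = 1 := by
        field_simp
      nlinarith [hupp, hsq, hinv, sq_nonneg (1 / (6 * Real.sqrt x))]
    have := Real.sqrt_le_sqrt hbound
    rwa [Real.sqrt_sq (le_of_lt hr_pos), Real.sqrt_sq (by positivity)] at this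

end
end
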